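/- arXiv:1404.6799 — 4 statements merged into one kernel-verified Lean document; each statement's English description precedes it below -/
import Mathlib

section
/- Let k,n ∈ ℕ with 4 ≤ k ≤ n−2, and let ℋ be a hierarchy over [n] all of whose clusters have cardinality at least 2 and at most n−k. Let a,a' ∈ [n] and J ∈ ℋ with a ∈ J and a' ∉ J. For a' ∈ ∪ℋ, let m_{a'} and M_{a'} denote the minimal and the maximal ℋ-cluster containing a'. Let X,X' ∈ ([n]−{a,a'} choose k−1) satisfy: (1) if a' ∈ ∪ℋ, then both X and X' contain an element b ∈ m_{a'}−{a'}, X contains an element c ∉ M_{a'}, and X' contains an element c' ∉ M_{a'}; (2) if a' ∉ ∪ℋ, then both X and X' contain an element d not belonging to the maximal ℋ-cluster containing J; (3) if there exists J̄ ∈ ℋ with a ∈ J̄ ⊊ J (take J̄ maximal among such clusters), then X' contains an element of J−J̄ and X'∩J̄=∅, while if no such J̄ exists, then X'∩J≠∅; (4) X∩J=∅, and if there exists J̃ ∈ ℋ with J ⊊ J̃ (take J̃ minimal among such clusters), then X contains an element of J̃−J. Then, in the free ℤ-module ⊕_{H∈ℋ} ℤH, J = Σ_{H∈ℋ, H∩({a}∪X)≠∅,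 H⊉{a}∪X} H − Σ_{H∈ℋ, H∩({a'}∪X)≠∅, H⊉{a'}∪X} H − Σ_{H∈ℋ, H∩({a}∪X')≠∅, H⊉{a}∪X'} H + Σ_{H∈ℋ, H∩({a'}∪X')≠∅, H⊉{a'}∪X'} H. -/
open scoped Classical
open Finset

noncomputable section

/-- The total weight of the minimal subtree of a tree `G` spanning the vertex set `A`:
the sum of the weights of those edges of `G` that lie on every walk between some pair
of vertices of `A` (in a tree, these are exactly the edges of the minimal subtree
containing `A`). -/
def treeWeight {V : Type} [Fintype V] (G : SimpleGraph V) (w : Sym2 V → ℝ)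
    (A : Finset V) : ℝ :=
  ∑ e ∈ (Finset.univ : Finset (Sym2 V)),
    if e ∈ G.edgeSet ∧ ∃ a ∈ A, ∃ b ∈ A, ∀ p : G.Walk a b, e ∈ p.edges then w e else 0

/-- A weighted finite tree whose set of leaves is (the image of) `α`. -/
structure WTree (α : Type) [Fintype α] : Type 1 where
  V : Type
  fintypeV : Fintype V
  G : SimpleGraph V
  isTree : G.IsTree
  w : Sym2 V → ℝ
  label : α → V
  label_inj : Function.Injective label
  leaf_iff : ∀ v : V, (G.neighborSet v).ncard = 1 ↔ v ∈ Set.range label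

attribute [instance] WTree.fintypeV

namespace WTree

variable {α : Type} [Fintype α]

/-- The `k`-weight `D_I` : the weight of the minimal subtree containing the leaves
labelled by `I`. -/
def D (T : WTree α) (I : Finset α) : ℝ := treeWeight T.G T.w (I.image T.label)

/-- A node is a vertex of degree `> 2`. -/
def IsNode (T : WTree α) (v : T.V) : Prop := 2 < (T.G.neighborSet v).ncard

/-- Two vertices are neighbours if the path between them contains exactly one node. -/
def Neighbours (T : WTree α) (a b : T.V) : Prop :=
  a ≠ b ∧ ∃ p : T.G.Walk a b, p.IsPath ∧
    (p.support.toFinset.filter (fun v => T.IsNode v)).card = 1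

/-- Two leaves (given by their labels) are neighbours. -/
def LeafNbr (T : WTree α) (i j : α) : Prop := T.Neighbours (T.label i) (T.label j)

/-- A set of leaves is a cherry if any two of its elements are neighbours. -/
def IsCherry (T : WTree α) (C : Finset α) : Prop :=
  ∀ i ∈ C, ∀ j ∈ C, i ≠ j → T.LeafNbr i j

/-- A cherry is complete if it is not strictly contained in another cherry. -/
def IsCompleteCherry (T : WTree α) (C : Finset α) : Prop :=
  T.IsCherry C ∧ ∀ C' : Finset α, T.IsCherry C' → ¬ C ⊂ C'

/-- Buneman's index `⟨i,j|l,m⟩` : in the subtree spanned by the four leaves, `i,j` are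
neighbours, `l,m` are neighbours and `i,l` are not neighbours; equivalently, the path
from `i` to `j` is disjoint from the path from `l` to `m`. -/
def Buneman (T : WTree α) (i j l m : α) : Prop :=
  i ≠ j ∧ l ≠ m ∧
  ∃ (p : T.G.Walk (T.label i) (T.label j)) (q : T.G.Walk (T.label l) (T.label m)),
    p.IsPath ∧ q.IsPath ∧ ∀ v, v ∈ p.support → v ∉ q.support

/-- The edge `e` lies on the (unique) path between `a` and `b`. -/
def edgeBetween (T : WTree α) (a b : T.V) (e : Sym2 T.V) : Prop :=
  ∀ p : T.G.Walk a b, e ∈ p.edges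

/-- The set of leaf labels lying on the `u`-side of the edge `{u,v}`. -/
def sideLeaves (T : WTree α) (u v : T.V) : Finset α :=
  Finset.univ.filter fun i => T.edgeBetween (T.label i) v s(u, v)

/-- A pseudostar of kind `(n,k)` (with `n = #α`): every edge divides the set of leaves
into two sets such that at least one of them has cardinality `≥ k`. -/
def IsPseudostar (T : WTree α) (k : ℕ) : Prop :=
  ∀ u v : T.V, T.G.Adj u v →
    k ≤ (T.sideLeaves u v).card ∨ k ≤ (T.sideLeaves v u).card

/-- A tree is essential if it has no vertices of degree 2. -/
def IsEssential (T : WTree α) : Prop := ∀ v : T.V, (T.G.neighborSet v).ncard ≠ 2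

/-- The edge `e` lies on the twig of the leaf labelled `i`, i.e. on the path from that
leaf to the nearest node (equivalently, on the path from the leaf to every node). -/
def OnTwig (T : WTree α) (i : α) (e : Sym2 T.V) : Prop :=
  ∀ w : T.V, T.IsNode w → T.edgeBetween (T.label i) w e

/-- An edge is internal if it is an edge of the tree lying on no twig. -/
def IsInternalEdge (T : WTree α) (e : Sym2 T.V) : Prop :=
  e ∈ T.G.edgeSet ∧ ∀ i : α, ¬ T.OnTwig i e

/-- All internal edges have nonzero weight. -/
def InternalNonzero (T : WTree α) : Prop := ∀ e, T.IsInternalEdge e → T.w e ≠ 0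

/-- All edges have positive weight. -/
def PositiveWeighted (T : WTree α) : Prop := ∀ e ∈ T.G.edgeSet, 0 < T.w e

/-- All weights are nonnegative and all internal edges have positive weight. -/
def NNIPWeighted (T : WTree α) : Prop :=
  (∀ e ∈ T.G.edgeSet, 0 ≤ T.w e) ∧ ∀ e, T.IsInternalEdge e → 0 < T.w e

/-- The edge `e` belongs to the minimal subtree containing the leaves labelled by `I`. -/
def inMinSubtree (T : WTree α) (I : Finset α) (e : Sym2 T.V) : Prop :=
  e ∈ T.G.edgeSet ∧ ∃ a ∈ I, ∃ b ∈ I, T.edgeBetween (T.label a) (T.label b) e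

end WTree

/-- Isomorphism of weighted trees fixing the labelled leaves. -/
def WIso {α : Type} [Fintype α] (T T' : WTree α) : Prop :=
  ∃ φ : T.V ≃ T'.V,
    (∀ a b : T.V, T.G.Adj a b ↔ T'.G.Adj (φ a) (φ b)) ∧
    (∀ a b : T.V, T.G.Adj a b → T.w s(a, b) = T'.w s(φ a, φ b)) ∧
    ∀ i : α, φ (T.label i) = T'.label i

/-- A family indexed by the `k`-subsets of `α` is l-treelike if it is realized by a
weighted tree with leaf set `α`. -/
def IsLTreelike (α : Type) [Fintype α] (k : ℕ) (D : Finset α → ℝ) : Prop :=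
  ∃ T : WTree α, ∀ I : Finset α, I.card = k → T.D I = D I

/-- p-l-treelike : realized by a positive-weighted tree with leaf set `α`. -/
def IsPLTreelike (α : Type) [Fintype α] (k : ℕ) (D : Finset α → ℝ) : Prop :=
  ∃ T : WTree α, T.PositiveWeighted ∧ ∀ I : Finset α, I.card = k → T.D I = D I

/-- nn-ip-l-treelike : realized by a nonnegative-weighted, internal-positive-weighted
tree with leaf set `α`. -/
def IsNNIPLTreelike (α : Type) [Fintype α] (k : ℕ) (D : Finset α → ℝ) : Prop :=
  ∃ T : WTree α, T.NNIPWeighted ∧ ∀ I : Finset α, I.card = k → T.D I = D I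

/-- p-treelike : realized on a subset of the vertices of a positive-weighted tree. -/
def IsPTreelike (n k : ℕ) (D : Finset (Fin n) → ℝ) : Prop :=
  ∃ (V : Type) (_ : Fintype V) (G : SimpleGraph V) (w : Sym2 V → ℝ) (f : Fin n → V),
    G.IsTree ∧ Function.Injective f ∧ (∀ e ∈ G.edgeSet, 0 < w e) ∧
    ∀ I : Finset (Fin n), I.card = k → treeWeight G w (I.image f) = D I


/-- A hierarchy: a set system in which any two members intersect in `∅` or in one
of the two. -/
def IsHierarchy {β : Type} (ℋ : Set (Finset β)) : Prop :=
  ∀ H ∈ ℋ, ∀ H' ∈ ℋ, H ∩ H' = ∅ ∨ H ∩ H' = H ∨ H ∩ H' = H'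

/-- The element `Σ_{H ∈ ℋ, H ∩ A ≠ ∅, H ⊉ A} H` of the free ℤ-module on the clusters. -/
def hsum {β : Type} (ℋ : Set (Finset β)) (A : Finset β) : Finset β →₀ ℤ :=
  ∑ᶠ H ∈ {H : Finset β | H ∈ ℋ ∧ (H ∩ A).Nonempty ∧ ¬ A ⊆ H}, Finsupp.single H 1

/-- `m` is a minimal cluster of `ℋ` containing `t`. -/
def IsMinCluster {β : Type} (ℋ : Set (Finset β)) (t : β) (m : Finset β) : Prop :=
  m ∈ ℋ ∧ t ∈ m ∧ ∀ H ∈ ℋ, t ∈ H → ¬ H ⊂ m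

/-- `M` is a maximal cluster of `ℋ` containing `t`. -/
def IsMaxCluster {β : Type} (ℋ : Set (Finset β)) (t : β) (M : Finset β) : Prop :=
  M ∈ ℋ ∧ t ∈ M ∧ ∀ H ∈ ℋ, t ∈ H → ¬ M ⊂ H

/-- `M` is a maximal cluster of `ℋ` containing the cluster `J`. -/
def IsMaxClusterContaining {β : Type} (ℋ : Set (Finset β)) (J M : Finset β) : Prop :=
  M ∈ ℋ ∧ J ⊆ M ∧ ∀ H ∈ ℋ, J ⊆ H → ¬ M ⊂ H

section FamHierarchy

variable (n k : ℕ) (D : Finset (Fin n) → ℝ)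

/-- `𝒞⁰` : the sets `Z` of cardinality `≥ 2` such that for all `i,j ∈ Z` the quantity
`D_{i,X} - D_{j,X}` does not depend on `X ∈ ([n] - {i,j} choose k-1)`. -/
def famC0 : Set (Finset (Fin n)) :=
  {Z | 2 ≤ Z.card ∧ ∀ i ∈ Z, ∀ j ∈ Z, ∀ X X' : Finset (Fin n),
    X.card = k - 1 → i ∉ X → j ∉ X → X'.card = k - 1 → i ∉ X' → j ∉ X' →
    D (insert i X) - D (insert j X) = D (insert i X') - D (insert j X')}

/-- `𝒞̲⁰` : the maximal elements of `𝒞⁰`. -/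
def famMaxC0 : Set (Finset (Fin n)) :=
  {Z | Z ∈ famC0 n k D ∧ ∀ Z' ∈ famC0 n k D, ¬ Z ⊂ Z'}

/-- Condition (b) in the definition of `𝒢^s` : there are `R, S` in
`([n]-{i,j,x,y} choose k-2)` with `D_{ijR} + D_{xyR} ≠ D_{ixR} + D_{jyR}` and
`D_{ijS} + D_{xyS} ≠ D_{iyS} + D_{jxS}`. -/
def famCondB (i j x y : Fin n) : Prop :=
  ∃ R S : Finset (Fin n),
    R.card = k - 2 ∧ i ∉ R ∧ j ∉ R ∧ x ∉ R ∧ y ∉ R ∧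
    S.card = k - 2 ∧ i ∉ S ∧ j ∉ S ∧ x ∉ S ∧ y ∉ S ∧
    D (insert i (insert j R)) + D (insert x (insert y R)) ≠
      D (insert i (insert x R)) + D (insert j (insert y R)) ∧
    D (insert i (insert j S)) + D (insert x (insert y S)) ≠
      D (insert i (insert y S)) + D (insert j (insert x S))

/-- Condition (b) in the definition of `𝒞^s` (with the roles of the pairs permuted). -/
def famCondB' (i j x y : Fin n) : Prop :=
  ∃ R S : Finset (Fin n),
    R.card = k - 2 ∧ i ∉ R ∧ j ∉ R ∧ x ∉ R ∧ y ∉ R ∧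
    S.card = k - 2 ∧ i ∉ S ∧ j ∉ S ∧ x ∉ S ∧ y ∉ S ∧
    D (insert i (insert x R)) + D (insert j (insert y R)) ≠
      D (insert i (insert j R)) + D (insert x (insert y R)) ∧
    D (insert i (insert x S)) + D (insert j (insert y S)) ≠
      D (insert i (insert y S)) + D (insert j (insert x S))

/-- `𝒢⁰`. -/
def famG0 : Set (Finset (Fin n)) :=
  {Z | Z ∈ famMaxC0 n k D ∧ Z.card ≤ n - k ∧
    ∀ i ∈ Z, ∀ j ∈ Z, ∀ x y : Fin n, x ∉ Z → y ∉ Z →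
      (({i, j} : Finset (Fin n)) ∈ famMaxC0 n k D ∧
        ({x, y} : Finset (Fin n)) ∈ famMaxC0 n k D) ∨
      famCondB n k D i j x y}

/-- `𝒞^s`, relative to the surviving set `N = [n]^s`. -/
def famCs (N : Finset (Fin n)) : Set (Finset (Fin n)) :=
  {Z | Z ⊆ N ∧ 2 ≤ Z.card ∧ ∀ i ∈ Z, ∀ j ∈ Z, ∀ x y : Fin n,
    x ∈ N → y ∈ N → x ≠ i → x ≠ j → y ≠ i → y ≠ j →
    ¬ (({i, x} : Finset (Fin n)) ∈ famMaxC0 n k D ∧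
        ({j, y} : Finset (Fin n)) ∈ famMaxC0 n k D) ∧
    ¬ famCondB' n k D i j x y}

/-- `𝒞̲^s` : the maximal elements of `𝒞^s`. -/
def famMaxCs (N : Finset (Fin n)) : Set (Finset (Fin n)) :=
  {Z | Z ∈ famCs n k D N ∧ ∀ Z' ∈ famCs n k D N, ¬ Z ⊂ Z'}

/-- The chain relation expressing that `y0` descends from `y` through the history
`hs = [𝒢⁰, …, 𝒢^{s-1}]` of pruned families. -/
def descChain : List (Set (Finset (Fin n))) → Fin n → Fin n → Prop
  | [], y0, y => y0 = y
  | G :: rest, y0, y =>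
      ∃ y1 : Fin n, (y1 = y0 ∨ ∃ Z ∈ G, y0 ∈ Z ∧ y1 ∈ Z) ∧ descChain rest y1 y

/-- `∂Z` : the set of elements of `[n]` descending from an element of `Z`. -/
def bdry (hs : List (Set (Finset (Fin n)))) (Z : Finset (Fin n)) : Finset (Fin n) :=
  Finset.univ.filter fun y0 => ∃ ys ∈ Z, descChain n hs y0 ys

/-- `𝒢^s` (for `s ≥ 1`), relative to the surviving set `N = [n]^s` and the history `hs`. -/
def famGs (N : Finset (Fin n)) (hs : List (Set (Finset (Fin n)))) :
    Set (Finset (Fin n)) :=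
  {Z | Z ∈ famMaxCs n k D N ∧ (bdry n hs Z).card ≤ n - k ∧
    ∀ i ∈ Z, ∀ j ∈ Z, ∀ x y : Fin n, x ∉ Z → y ∉ Z →
      (({i, j} : Finset (Fin n)) ∈ famMaxC0 n k D ∧
        ({x, y} : Finset (Fin n)) ∈ famMaxC0 n k D) ∨
      famCondB n k D i j x y}

/-- The pair `([n]^s, [𝒢⁰, …, 𝒢^{s-1}])`. -/
def famStage : ℕ → Finset (Fin n) × List (Set (Finset (Fin n)))
  | 0 => (Finset.univ, [])
  | s + 1 =>
      let p := famStage s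
      let G := if s = 0 then famG0 n k D else famGs n k D p.1 p.2
      (p.1.filter fun y => ∀ Z ∈ G, y ∈ Z → ∀ z ∈ Z, y ≤ z, p.2 ++ [G])

/-- `𝒢^s`. -/
def famGAt (s : ℕ) : Set (Finset (Fin n)) :=
  if s = 0 then famG0 n k D
  else famGs n k D (famStage n k D s).1 (famStage n k D s).2

/-- The hierarchy over `[n]` associated to the family `{D_I}`. -/
def famHier : Set (Finset (Fin n)) :=
  {A | ∃ s : ℕ, ∃ Z ∈ famGAt n k D s, A = bdry n (famStage n k D s).2 Z}

/-- Condition (i): if `ℋ` covers `[n]` then the number of maximal clusters is not 2. -/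
def CondI {n : ℕ} (ℋ : Set (Finset (Fin n))) : Prop :=
  (∀ x : Fin n, ∃ H ∈ ℋ, x ∈ H) →
    {H | H ∈ ℋ ∧ ∀ H' ∈ ℋ, ¬ H ⊂ H'}.ncard ≠ 2

/-- Condition (ii): for `q ∈ {1,…,n-1}`, `s ∈ {1, k-1}`, `W, W' ∈ ([n] choose s)`,
the sum `Σ_i (D_{W Z_i} - D_{W' Z_i})` takes the same value on all choices of the
`Z_i ∈ ([n]-W-W' choose k-s)` on which the corresponding element of the free
ℤ-module `⊕_{H ∈ ℋ} ℤ H` is the same. -/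
def CondII (n k : ℕ) (D : Finset (Fin n) → ℝ) (ℋ : Set (Finset (Fin n))) : Prop :=
  ∀ q : ℕ, 1 ≤ q → q ≤ n - 1 → ∀ s : ℕ, s = 1 ∨ s = k - 1 →
    ∀ W W' : Finset (Fin n), W.card = s → W'.card = s →
    ∀ Z Z' : ℕ → Finset (Fin n),
      (∀ i < q, (Z i).card = k - s ∧ Disjoint (Z i) W ∧ Disjoint (Z i) W') →
      (∀ i < q, (Z' i).card = k - s ∧ Disjoint (Z' i) W ∧ Disjoint (Z' i) W') →
      (∑ i ∈ Finset.range q, (hsum ℋ (W ∪ Z i) - hsum ℋ (W' ∪ Z i)) =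
        ∑ i ∈ Finset.range q, (hsum ℋ (W ∪ Z' i) - hsum ℋ (W' ∪ Z' i))) →
      (∑ i ∈ Finset.range q, (D (W ∪ Z i) - D (W' ∪ Z i)) =
        ∑ i ∈ Finset.range q, (D (W ∪ Z' i) - D (W' ∪ Z' i)))

end FamHierarchy

section Pruning

namespace WTree

variable {α : Type} [Fintype α]

/-- The subtree of `T` induced on the vertex set `S` (as a graph on the ambient
vertex set). Pruning a cherry, i.e. contracting the twigs of its leaves, is realized
by deleting the vertices of those twigs except the stalk. -/
def restrictG (T : WTree α) (S : Set T.V) : SimpleGraph T.V where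
  Adj a b := T.G.Adj a b ∧ a ∈ S ∧ b ∈ S
  symm := ⟨fun _ _ h => ⟨h.1.symm, h.2.2, h.2.1⟩⟩
  loopless := ⟨fun a h => T.G.loopless.irrefl a h.1⟩

/-- Degree in the pruned tree. -/
def rdeg (T : WTree α) (S : Set T.V) (v : T.V) : ℕ :=
  ((T.restrictG S).neighborSet v).ncard

/-- Leaf of the pruned tree. -/
def rleaf (T : WTree α) (S : Set T.V) (v : T.V) : Prop := v ∈ S ∧ T.rdeg S v = 1

/-- Node (vertex of degree `> 2`) of the pruned tree. -/
def rnode (T : WTree α) (S : Set T.V) (v : T.V) : Prop := v ∈ S ∧ 2 < T.rdeg S v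

/-- Neighbours in the pruned tree: the path between them contains exactly one node. -/
def rnbr (T : WTree α) (S : Set T.V) (a b : T.V) : Prop :=
  a ≠ b ∧ ∃ p : (T.restrictG S).Walk a b, p.IsPath ∧
    (p.support.toFinset.filter (fun v => T.rnode S v)).card = 1

/-- Cherry of the pruned tree: a set of leaves any two of which are neighbours. -/
def rCherry (T : WTree α) (S : Set T.V) (C : Set T.V) : Prop :=
  (∀ v ∈ C, T.rleaf S v) ∧ ∀ a ∈ C, ∀ b ∈ C, a ≠ b → T.rnbr S a b

/-- Complete cherry of the pruned tree. -/
def rCompleteCherry (T : WTree α) (S : Set T.V) (C : Set T.V) : Prop :=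
  T.rCherry S C ∧ ∀ C' : Set T.V, T.rCherry S C' → ¬ C ⊂ C'

/-- The stalk of a cherry: the node lying on the path from any element of the cherry
to any node. -/
def rStalk (T : WTree α) (S : Set T.V) (C : Set T.V) (v : T.V) : Prop :=
  T.rnode S v ∧ ∀ a ∈ C, ∀ w : T.V, T.rnode S w →
    ∀ p : (T.restrictG S).Walk a w, p.IsPath → v ∈ p.support

/-- `v` is on the twig of the leaf `ℓ` in the pruned tree: `v` is not a node and lies
on the path from `ℓ` to every node. -/
def rTwigVert (T : WTree α) (S : Set T.V) (ℓ v : T.V) : Prop :=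
  v ∈ S ∧ ¬ T.rnode S v ∧ ∀ w : T.V, T.rnode S w →
    ∀ p : (T.restrictG S).Walk ℓ w, p.IsPath → v ∈ p.support

/-- The vertex set obtained by pruning the cherry `C` (contracting the twigs of its
leaves). -/
def pruneCherry (T : WTree α) (S : Set T.V) (C : Set T.V) : Set T.V :=
  S \ {v | ∃ ℓ ∈ C, T.rTwigVert S ℓ v}

/-- A good cherry: a complete cherry whose stalk is a leaf of the tree obtained by
pruning it. -/
def rGoodCherry (T : WTree α) (S : Set T.V) (C : Set T.V) : Prop :=
  T.rCompleteCherry S C ∧ ∃ v : T.V, T.rStalk S C v ∧ T.rleaf (T.pruneCherry S C) v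

/-- The leaf labelled `x` (of the original tree) descends from the leaf `y` of the
pruned tree: the path in the original tree from `x` to `y` contains no leaf of the
pruned tree other than `y`. -/
def descLeaf (T : WTree α) (S : Set T.V) (x : α) (y : T.V) : Prop :=
  T.rleaf S y ∧ ∀ p : T.G.Walk (T.label x) y, p.IsPath →
    ∀ v ∈ p.support, T.rleaf S v → v = y

/-- `∂C` : the set of labels descending from an element of `C`. -/
def bdryV (T : WTree α) (S : Set T.V) (C : Set T.V) : Finset α :=
  Finset.univ.filter fun x => ∃ y ∈ C, T.descLeaf S x y

/-- One pruning step: prune all good cherries `C` with `#∂C ≤ r`. -/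
def pruneStage (T : WTree α) (r : ℕ) (S : Set T.V) : Set T.V :=
  S \ {v | ∃ C : Set T.V, T.rGoodCherry S C ∧ (T.bdryV S C).card ≤ r ∧
    ∃ ℓ ∈ C, T.rTwigVert S ℓ v}

/-- The vertex set of `P^s`. -/
def stageSet (T : WTree α) (r : ℕ) : ℕ → Set T.V
  | 0 => Set.univ
  | s + 1 => T.pruneStage r (T.stageSet r s)

/-- The hierarchy associated to the pseudostar `T` (with `r = n - k`): the sets `∂C`
for `C` a good cherry of some `P^s` with `#∂C ≤ r`; when `L(P^s)` is the union of two
complete cherries both with `#∂C_i ≤ r`, only the one whose `∂` contains the minimum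
of `∂C₁ ∪ ∂C₂` is included. -/
def psHier [LinearOrder α] (T : WTree α) (r : ℕ) : Set (Finset α) :=
  {A | ∃ (s : ℕ) (C : Set T.V),
    T.rGoodCherry (T.stageSet r s) C ∧
    (T.bdryV (T.stageSet r s) C).card ≤ r ∧
    A = T.bdryV (T.stageSet r s) C ∧
    ∀ C₂ : Set T.V, T.rCompleteCherry (T.stageSet r s) C₂ →
      (∀ v : T.V, T.rleaf (T.stageSet r s) v ↔ v ∈ C ∪ C₂) →
      (T.bdryV (T.stageSet r s) C₂).card ≤ r →
      ∃ m ∈ T.bdryV (T.stageSet r s) C,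
        ∀ x ∈ T.bdryV (T.stageSet r s) C ∪ T.bdryV (T.stageSet r s) C₂, m ≤ x}

/-- The edge `e` belongs to the twig of the leaf `v` in the pruned tree on `S`. -/
def rOnTwigEdge (T : WTree α) (S : Set T.V) (v : T.V) (e : Sym2 T.V) : Prop :=
  e ∈ (T.restrictG S).edgeSet ∧ ∀ w : T.V, T.rnode S w →
    ∀ p : (T.restrictG S).Walk v w, p.IsPath → e ∈ p.edges

end WTree

end Pruning


lemma aux_exists_max {β : Type} [Fintype β] (S : Set (Finset β)) (hne : S.Nonempty) :
    ∃ M ∈ S, ∀ H ∈ S, ¬ M ⊂ H := by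
  obtain ⟨M, hM, hmax⟩ := Set.Finite.exists_maximalFor id S (Set.toFinite S) hne
  exact ⟨M, hM, fun H hH h => h.2 (hmax hH h.subset)⟩

lemma aux_exists_min {β : Type} [Fintype β] (S : Set (Finset β)) (hne : S.Nonempty) :
    ∃ M ∈ S, ∀ H ∈ S, ¬ H ⊂ M := by
  obtain ⟨M, hM, hmin⟩ := Set.Finite.exists_minimalFor id S (Set.toFinite S) hne
  exact ⟨M, hM, fun H hH h => h.2 (hmin hH h.subset)⟩

lemma aux_comp {β : Type} {ℋ : Set (Finset β)} (hH : IsHierarchy ℋ) :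
    ∀ H ∈ ℋ, ∀ K ∈ ℋ, ∀ x, x ∈ H → x ∈ K → H ⊆ K ∨ K ⊆ H := by
  intro H hH1 K hK1 x hxH hxK
  rcases hH H hH1 K hK1 with h | h | h
  · exact (Finset.eq_empty_iff_forall_notMem.mp h x
      (Finset.mem_inter.mpr ⟨hxH, hxK⟩)).elim
  · exact Or.inl fun y hy => (Finset.mem_inter.mp (h.symm ▸ hy)).2
  · exact Or.inr fun y hy => (Finset.mem_inter.mp (h.symm ▸ hy)).1

lemma aux_hsum_apply {β : Type} [Fintype β] (ℋ : Set (Finset β)) (A K : Finset β) :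
    hsum ℋ A K = if K ∈ ℋ ∧ (∃ x ∈ K, x ∈ A) ∧ ¬ A ⊆ K then 1 else 0 := by
  unfold hsum
  rw [← Set.coe_toFinset {H : Finset β | H ∈ ℋ ∧ (H ∩ A).Nonempty ∧ ¬ A ⊆ H},
    finsum_mem_coe_finset, Finsupp.finset_sum_apply]
  simp only [Finsupp.single_apply]
  rw [Finset.sum_ite_eq' _ K (fun _ => (1:ℤ))]
  simp only [Set.mem_toFinset, Set.mem_setOf_eq]
  by_cases h : K ∈ ℋ ∧ (∃ x ∈ K, x ∈ A) ∧ ¬ A ⊆ K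
  · rw [if_pos h, if_pos ⟨h.1, (by
      obtain ⟨x, h1, h2⟩ := h.2.1
      exact ⟨x, Finset.mem_inter.mpr ⟨h1, h2⟩⟩), h.2.2⟩]
  · rw [if_neg h, if_neg (fun hc => h ⟨hc.1, (by
      obtain ⟨x, hx⟩ := hc.2.1
      exact ⟨x, (Finset.mem_inter.mp hx).1, (Finset.mem_inter.mp hx).2⟩), hc.2.2⟩)]

lemma aux_cmem {β : Type} (K A S : Finset β) (t : β) (ht : t ∈ K) (htA : t ∈ A)
    (hAS : ∀ y ∈ A, y ≠ t → y ∈ S) (hSA : ∀ y ∈ S, y ∈ A) :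
    ((∃ x ∈ K, x ∈ A) ∧ ¬ A ⊆ K) ↔ ¬ S ⊆ K := by
  constructor
  · rintro ⟨-, h2⟩ hS
    refine h2 fun y hy => ?_
    by_cases hyt : y = t
    · exact hyt ▸ ht
    · exact hS (hAS y hy hyt)
  · intro h
    exact ⟨⟨t, ht, htA⟩, fun hc => h fun y hy => hc (hSA y hy)⟩

lemma aux_cnmem {β : Type} (K A S : Finset β) (t : β) (ht : t ∉ K) (htA : t ∈ A)
    (hAS : ∀ y ∈ A, y ≠ t → y ∈ S) (hSA : ∀ y ∈ S, y ∈ A) :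
    ((∃ x ∈ K, x ∈ A) ∧ ¬ A ⊆ K) ↔ ∃ x ∈ K, x ∈ S := by
  constructor
  · rintro ⟨⟨x, hxK, hxA⟩, -⟩
    exact ⟨x, hxK, hAS x hxA (fun he => ht (he ▸ hxK))⟩
  · rintro ⟨x, hxK, hxS⟩
    exact ⟨⟨x, hxK, hSA x hxS⟩, fun hc => ht (hc htA)⟩

/-- **Lemma.** Let `4 ≤ k ≤ n-2` and let `ℋ` be a hierarchy over `[n]` whose clusters
have cardinality at least `2` and at most `n-k`. Let `a, a' ∈ [n]`, `J ∈ ℋ` with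
`a ∈ J`, `a' ∉ J`, and let `X, X' ∈ ([n]-{a,a'} choose k-1)` satisfy conditions
(1)–(4) below. Then, in the free ℤ-module on `ℋ`,
`J = Σ_{H∩({a}∪X)≠∅, H⊉{a}∪X} H - Σ_{H∩({a'}∪X)≠∅, H⊉{a'}∪X} H
   - Σ_{H∩({a}∪X')≠∅, H⊉{a}∪X'} H + Σ_{H∩({a'}∪X')≠∅, H⊉{a'}∪X'} H`. -/
theorem lemma_a_a'_X_X' (n k : ℕ) (hk4 : 4 ≤ k) (hkn : k ≤ n - 2)
    (ℋ : Set (Finset (Fin n))) (hH : IsHierarchy ℋ)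
    (hcard : ∀ H ∈ ℋ, 2 ≤ H.card ∧ H.card ≤ n - k)
    (a a' : Fin n) (J : Finset (Fin n)) (hJ : J ∈ ℋ) (haJ : a ∈ J) (ha'J : a' ∉ J)
    (X X' : Finset (Fin n))
    (hXcard : X.card = k - 1) (haX : a ∉ X) (ha'X : a' ∉ X)
    (hX'card : X'.card = k - 1) (haX' : a ∉ X') (ha'X' : a' ∉ X')
    -- (1) if `a' ∈ ∪ℋ`, both `X` and `X'` contain an element `b ∈ m_{a'} - {a'}`,
    -- `X` contains an element `c ∉ M_{a'}` and `X'` contains an element `c' ∉ M_{a'}`: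
    (hyp1 : ∀ ma' Ma' : Finset (Fin n),
      IsMinCluster ℋ a' ma' → IsMaxCluster ℋ a' Ma' →
      (∃ b, b ∈ ma' ∧ b ≠ a' ∧ b ∈ X ∧ b ∈ X') ∧
      (∃ c ∈ X, c ∉ Ma') ∧ (∃ c' ∈ X', c' ∉ Ma'))
    -- (2) if `a' ∉ ∪ℋ`, both `X` and `X'` contain an element not in the maximal
    -- cluster containing `J`:
    (hyp2 : (¬ ∃ H ∈ ℋ, a' ∈ H) →
      ∃ d, d ∈ X ∧ d ∈ X' ∧ ∀ MJ : Finset (Fin n),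
        IsMaxClusterContaining ℋ J MJ → d ∉ MJ)
    -- (3) if there is a maximal `J̄ ∈ ℋ` with `a ∈ J̄ ⊊ J`, then `X'` contains an
    -- element of `J - J̄` and `X' ∩ J̄ = ∅`; if there is no such cluster, `X' ∩ J ≠ ∅`:
    (hyp3 : (∀ Jb : Finset (Fin n), Jb ∈ ℋ → a ∈ Jb → Jb ⊂ J →
        (∀ J2 ∈ ℋ, a ∈ J2 → J2 ⊂ J → ¬ Jb ⊂ J2) →
        (∃ x ∈ X', x ∈ J ∧ x ∉ Jb) ∧ X' ∩ Jb = ∅) ∧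
      ((¬ ∃ Jb ∈ ℋ, a ∈ Jb ∧ Jb ⊂ J) → (X' ∩ J).Nonempty))
    -- (4) `X ∩ J = ∅`, and if there is a minimal `J̃ ∈ ℋ` with `J ⊊ J̃`, then `X`
    -- contains an element of `J̃ - J`:
    (hyp4 : X ∩ J = ∅ ∧ ∀ Jt ∈ ℋ, J ⊂ Jt →
        (∀ J2 ∈ ℋ, J ⊂ J2 → ¬ J2 ⊂ Jt) → ∃ x ∈ X, x ∈ Jt ∧ x ∉ J) :
    (Finsupp.single J 1 : Finset (Fin n) →₀ ℤ) =
      hsum ℋ (insert a X) - hsum ℋ (insert a' X)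
        - hsum ℋ (insert a X') + hsum ℋ (insert a' X') := by
  have hJcard := (hcard J hJ).1
  have hXne : X.Nonempty := Finset.card_pos.mp (by omega)
  have hX'ne : X'.Nonempty := Finset.card_pos.mp (by omega)
  have subeq : ∀ s t : Finset (Fin n), s ⊆ t → s = t ∨ s ⊂ t := by
    intro s t h
    rcases eq_or_ne s t with h' | h'
    · exact Or.inl h'
    · exact Or.inr (Finset.ssubset_iff_subset_ne.mpr ⟨h, h'⟩)
  have comp := aux_comp hH
  have factA' : ∀ K ∈ ℋ, a' ∈ K →
      (∃ x ∈ X, x ∈ K) ∧ (∃ x ∈ X', x ∈ K) ∧ (∃ x ∈ X, x ∉ K) ∧ (∃ x ∈ X', x ∉ K) := by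
    intro K hK ha'K
    obtain ⟨m, hm, hmmin⟩ := aux_exists_min {H | H ∈ ℋ ∧ a' ∈ H} ⟨K, hK, ha'K⟩
    obtain ⟨M, hM, hMmax⟩ := aux_exists_max {H | H ∈ ℋ ∧ a' ∈ H} ⟨K, hK, ha'K⟩
    obtain ⟨⟨b, hbm, -, hbX, hbX'⟩, ⟨c, hcX, hcM⟩, ⟨c', hc'X', hc'M⟩⟩ :=
      hyp1 m M ⟨hm.1, hm.2, fun H hH' h1 => hmmin H ⟨hH', h1⟩⟩
        ⟨hM.1, hM.2, fun H hH' h1 => hMmax H ⟨hH', h1⟩⟩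
    have hmK : m ⊆ K := by
      rcases comp m hm.1 K hK a' hm.2 ha'K with h | h
      · exact h
      · rcases subeq K m h with h' | h'
        · exact fun y hy => h' ▸ hy
        · exact absurd h' (hmmin K ⟨hK, ha'K⟩)
    have hKM : K ⊆ M := by
      rcases comp K hK M hM.1 a' ha'K hM.2 with h | h
      · exact h
      · rcases subeq M K h with h' | h'
        · exact fun y hy => h'.symm ▸ hy
        · exact absurd h' (hMmax K ⟨hK, ha'K⟩)
    exact ⟨⟨b, hbX, hmK hbm⟩, ⟨b, hbX', hmK hbm⟩,
      ⟨c, hcX, fun h => hcM (hKM h)⟩, ⟨c', hc'X', fun h => hc'M (hKM h)⟩⟩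
  have factF : ∀ K ∈ ℋ, J ⊆ K → a' ∉ K → (∃ x ∈ X, x ∉ K) ∧ (∃ x ∈ X', x ∉ K) := by
    intro K hK hJK ha'K
    by_cases hexa' : ∃ H ∈ ℋ, a' ∈ H
    · obtain ⟨H0, hH0, ha'H0⟩ := hexa'
      obtain ⟨m, hm, hmmin⟩ := aux_exists_min {H | H ∈ ℋ ∧ a' ∈ H} ⟨H0, hH0, ha'H0⟩
      obtain ⟨M, hM, hMmax⟩ := aux_exists_max {H | H ∈ ℋ ∧ a' ∈ H} ⟨H0, hH0, ha'H0⟩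
      obtain ⟨⟨b, hbm, -, hbX, hbX'⟩, ⟨c, hcX, hcM⟩, ⟨c', hc'X', hc'M⟩⟩ :=
        hyp1 m M ⟨hm.1, hm.2, fun H hH' h1 => hmmin H ⟨hH', h1⟩⟩
          ⟨hM.1, hM.2, fun H hH' h1 => hMmax H ⟨hH', h1⟩⟩
      have hmM : m ⊆ M := by
        rcases comp m hm.1 M hM.1 a' hm.2 hM.2 with h | h
        · exact h
        · rcases subeq M m h with h' | h'
          · exact fun y hy => h'.symm ▸ hy
          · exact absurd h' (hMmax m ⟨hm.1, hm.2⟩)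
      by_cases hKm : ∃ x ∈ K, x ∈ m
      · obtain ⟨x0, hx0K, hx0m⟩ := hKm
        rcases comp K hK m hm.1 x0 hx0K hx0m with h | h
        · exact ⟨⟨c, hcX, fun hc => hcM (hmM (h hc))⟩,
            ⟨c', hc'X', fun hc => hc'M (hmM (h hc))⟩⟩
        · exact absurd (h hm.2) ha'K
      · have hbK : b ∉ K := fun hb => hKm ⟨b, hb, hbm⟩
        exact ⟨⟨b, hbX, hbK⟩, ⟨b, hbX', hbK⟩⟩
    · obtain ⟨d, hdX, hdX', hd⟩ := hyp2 hexa'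
      obtain ⟨T, hT, hTmax⟩ :=
        aux_exists_max {H | H ∈ ℋ ∧ K ⊆ H} ⟨K, hK, Finset.Subset.refl K⟩
      have hdT : d ∉ T := hd T ⟨hT.1, hJK.trans hT.2,
        fun H hH' _ hTH => hTmax H ⟨hH', hT.2.trans hTH.subset⟩ hTH⟩
      exact ⟨⟨d, hdX, fun h => hdT (hT.2 h)⟩, ⟨d, hdX', fun h => hdT (hT.2 h)⟩⟩
  have fact3 : (∃ x ∈ X', x ∈ J) ∧ ∀ K ∈ ℋ, a ∈ K → K ⊂ J → ∀ y ∈ X', y ∉ K := by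
    by_cases hexJb : ∃ Jb ∈ ℋ, a ∈ Jb ∧ Jb ⊂ J
    · obtain ⟨J0, hJ0, haJ0, hJ0J⟩ := hexJb
      obtain ⟨Jb, hJb, hJbmax⟩ :=
        aux_exists_max {H | H ∈ ℋ ∧ a ∈ H ∧ H ⊂ J} ⟨J0, hJ0, haJ0, hJ0J⟩
      obtain ⟨⟨x, hxX', hxJ, -⟩, hX'Jb⟩ :=
        hyp3.1 Jb hJb.1 hJb.2.1 hJb.2.2 (fun J2 hJ2 h1 h2 => hJbmax J2 ⟨hJ2, h1, h2⟩)
      have hX'Jb' : ∀ y ∈ X', y ∉ Jb := fun y hy hyJb =>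
        (Finset.eq_empty_iff_forall_notMem.mp hX'Jb y)
          (Finset.mem_inter.mpr ⟨hy, hyJb⟩)
      refine ⟨⟨x, hxX', hxJ⟩, ?_⟩
      intro K hK haK hKJ
      have hKJb : K ⊆ Jb := by
        rcases comp K hK Jb hJb.1 a haK hJb.2.1 with h | h
        · exact h
        · rcases subeq Jb K h with h' | h'
          · exact fun y hy => h'.symm ▸ hy
          · exact absurd h' (hJbmax K ⟨hK, haK, hKJ⟩)
      exact fun y hy hyK => hX'Jb' y hy (hKJb hyK)
    · obtain ⟨x, hx⟩ := hyp3.2 hexJb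
      exact ⟨⟨x, (Finset.mem_inter.mp hx).1, (Finset.mem_inter.mp hx).2⟩,
        fun K hK haK hKJ => absurd ⟨K, hK, haK, hKJ⟩ hexJb⟩
  have factSup : ∀ K ∈ ℋ, J ⊂ K → ∃ x ∈ X, x ∈ K := by
    intro K hK hJK
    obtain ⟨Jt, hJt, hJtmin⟩ := aux_exists_min {H | H ∈ ℋ ∧ J ⊂ H} ⟨K, hK, hJK⟩
    obtain ⟨x, hxX, hxJt, -⟩ :=
      hyp4.2 Jt hJt.1 hJt.2 (fun J2 h1 h2 => hJtmin J2 ⟨h1, h2⟩)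
    have hJtK : Jt ⊆ K := by
      rcases comp Jt hJt.1 K hK a (hJt.2.subset haJ) (hJK.subset haJ) with h | h
      · exact h
      · rcases subeq K Jt h with h' | h'
        · exact fun y hy => h' ▸ hy
        · exact absurd h' (hJtmin K ⟨hK, hJK⟩)
    exact ⟨x, hxX, hJtK hxJt⟩
  have hdisjXJ : ∀ x ∈ X, x ∉ J := fun x hx hxJ =>
    (Finset.eq_empty_iff_forall_notMem.mp hyp4.1 x) (Finset.mem_inter.mpr ⟨hx, hxJ⟩)
  ext K
  simp only [Finsupp.coe_add, Finsupp.coe_sub, Pi.add_apply, Pi.sub_apply,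
    aux_hsum_apply, Finsupp.single_apply]
  by_cases hKH : K ∈ ℋ
  swap
  · rw [if_neg (show ¬ (J = K) from fun h => (h.symm ▸ hKH : J ∉ ℋ) hJ)]
    rw [if_neg (fun h : K ∈ ℋ ∧ (∃ x ∈ K, x ∈ insert a X) ∧ ¬ insert a X ⊆ K => hKH h.1)]
    rw [if_neg (fun h : K ∈ ℋ ∧ (∃ x ∈ K, x ∈ insert a' X) ∧ ¬ insert a' X ⊆ K => hKH h.1)]
    rw [if_neg (fun h : K ∈ ℋ ∧ (∃ x ∈ K, x ∈ insert a X') ∧ ¬ insert a X' ⊆ K => hKH h.1)]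
    rw [if_neg (fun h : K ∈ ℋ ∧ (∃ x ∈ K, x ∈ insert a' X') ∧ ¬ insert a' X' ⊆ K => hKH h.1)]
    ring
  simp only [hKH, true_and]
  have icm : ∀ (t : Fin n) (S : Finset (Fin n)), t ∈ K →
      (((∃ x ∈ K, x ∈ insert t S) ∧ ¬ insert t S ⊆ K) ↔ ¬ S ⊆ K) :=
    fun t S ht => aux_cmem K (insert t S) S t ht (Finset.mem_insert_self t S)
      (fun y hy hne => (Finset.mem_insert.mp hy).resolve_left hne)
      (fun y hy => Finset.mem_insert_of_mem hy)
  have icn : ∀ (t : Fin n) (S : Finset (Fin n)), t ∉ K →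
      (((∃ x ∈ K, x ∈ insert t S) ∧ ¬ insert t S ⊆ K) ↔ ∃ x ∈ K, x ∈ S) :=
    fun t S ht => aux_cnmem K (insert t S) S t ht (Finset.mem_insert_self t S)
      (fun y hy hne => (Finset.mem_insert.mp hy).resolve_left hne)
      (fun y hy => Finset.mem_insert_of_mem hy)
  by_cases haK : a ∈ K <;> by_cases ha'K : a' ∈ K
  · -- a ∈ K, a' ∈ K
    simp only [icm a X haK, icm a' X ha'K, icm a X' haK, icm a' X' ha'K]
    rw [if_neg (show ¬ (J = K) from fun h => ha'J (h.symm ▸ ha'K))]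
    ring
  · -- a ∈ K, a' ∉ K
    simp only [icm a X haK, icn a' X ha'K, icm a X' haK, icn a' X' ha'K]
    by_cases hJK : J = K
    · subst hJK
      obtain ⟨x0, hx0⟩ := hXne
      obtain ⟨-, x', hx'X', hx'J⟩ := factF J hJ (Finset.Subset.refl J) ha'J
      obtain ⟨y2, hy2X', hy2J⟩ := fact3.1
      rw [if_pos rfl]
      rw [if_pos (show ¬ X ⊆ J from fun h => hdisjXJ x0 hx0 (h hx0))]
      rw [if_neg (show ¬ ∃ x ∈ J, x ∈ X from fun ⟨y, hyJ, hyX⟩ => hdisjXJ y hyX hyJ)]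
      rw [if_pos (show ¬ X' ⊆ J from fun h => hx'J (h hx'X'))]
      rw [if_pos (show ∃ x ∈ J, x ∈ X' from ⟨y2, hy2J, hy2X'⟩)]
      ring
    · rw [if_neg hJK]
      rcases comp J hJ K hKH a haJ haK with h | h
      · -- J ⊂ K
        have hJK' : J ⊂ K := Finset.ssubset_iff_subset_ne.mpr ⟨h, hJK⟩
        obtain ⟨⟨x1, hx1X, hx1K⟩, x2, hx2X', hx2K⟩ := factF K hKH h ha'K
        obtain ⟨y1, hy1X, hy1K⟩ := factSup K hKH hJK'
        obtain ⟨y2, hy2X', hy2J⟩ := fact3.1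
        rw [if_pos (show ¬ X ⊆ K from fun hc => hx1K (hc hx1X))]
        rw [if_pos (show ∃ x ∈ K, x ∈ X from ⟨y1, hy1K, hy1X⟩)]
        rw [if_pos (show ¬ X' ⊆ K from fun hc => hx2K (hc hx2X'))]
        rw [if_pos (show ∃ x ∈ K, x ∈ X' from ⟨y2, hJK'.subset hy2J, hy2X'⟩)]
        ring
      · -- K ⊂ J
        have hKJ' : K ⊂ J :=
          Finset.ssubset_iff_subset_ne.mpr ⟨h, fun hc => hJK hc.symm⟩
        obtain ⟨x0, hx0⟩ := hXne
        obtain ⟨x0', hx0'⟩ := hX'ne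
        have hX'K := fact3.2 K hKH haK hKJ'
        rw [if_pos (show ¬ X ⊆ K from fun hc => hdisjXJ x0 hx0 (hKJ'.subset (hc hx0)))]
        rw [if_neg (show ¬ ∃ x ∈ K, x ∈ X from
          fun ⟨y, hyK, hyX⟩ => hdisjXJ y hyX (hKJ'.subset hyK))]
        rw [if_pos (show ¬ X' ⊆ K from fun hc => hX'K x0' hx0' (hc hx0'))]
        rw [if_neg (show ¬ ∃ x ∈ K, x ∈ X' from
          fun ⟨y, hyK, hyX'⟩ => hX'K y hyX' hyK)]
        ring
  · -- a ∉ K, a' ∈ K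
    simp only [icn a X haK, icm a' X ha'K, icn a X' haK, icm a' X' ha'K]
    obtain ⟨⟨x1, hx1X, hx1K⟩, ⟨x2, hx2X', hx2K⟩, ⟨x3, hx3X, hx3K⟩, x4, hx4X', hx4K⟩ :=
      factA' K hKH ha'K
    rw [if_neg (show ¬ (J = K) from fun h => haK (h ▸ haJ))]
    rw [if_pos (show ∃ x ∈ K, x ∈ X from ⟨x1, hx1K, hx1X⟩)]
    rw [if_pos (show ¬ X ⊆ K from fun hc => hx3K (hc hx3X))]
    rw [if_pos (show ∃ x ∈ K, x ∈ X' from ⟨x2, hx2K, hx2X'⟩)]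
    rw [if_pos (show ¬ X' ⊆ K from fun hc => hx4K (hc hx4X'))]
    ring
  · -- a ∉ K, a' ∉ K
    simp only [icn a X haK, icn a' X ha'K, icn a X' haK, icn a' X' ha'K]
    rw [if_neg (show ¬ (J = K) from fun h => haK (h ▸ haJ))]
    ring

end
end

section
/- Let ℋ be a hierarchy over [n] all of whose clusters have cardinality at least 2, and let a,a' be distinct elements of [n]. Then #{J ∈ ℋ : a' ∈ J, a ∉ J} + #{J ∈ ℋ : a ∈ J, a' ∉ J} ≤ n−2. -/
open scoped Classical
open Finset

noncomputable section

/-- **Lemma.** For a hierarchy `ℋ` over `[n]` whose clusters all have cardinality at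
least 2, and distinct `a, a' ∈ [n]`,
`#{J ∈ ℋ : a' ∈ J, a ∉ J} + #{J ∈ ℋ : a ∈ J, a' ∉ J} ≤ n - 2`. -/
theorem hierarchy_chain_count (n : ℕ) (ℋ : Set (Finset (Fin n)))
    (hH : IsHierarchy ℋ) (hcard : ∀ H ∈ ℋ, 2 ≤ H.card)
    (a a' : Fin n) (haa : a ≠ a') :
    {J | J ∈ ℋ ∧ a' ∈ J ∧ a ∉ J}.ncard + {J | J ∈ ℋ ∧ a ∈ J ∧ a' ∉ J}.ncard
      ≤ n - 2 := by
  classical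
  have chain : ∀ t : Fin n, ∀ J ∈ ℋ, ∀ J' ∈ ℋ, t ∈ J → t ∈ J' → J ⊆ J' ∨ J' ⊆ J := by
    intro t J hJ J' hJ' ht ht'
    rcases hH J hJ J' hJ' with h | h | h
    · exfalso
      rw [Finset.eq_empty_iff_forall_notMem] at h
      simp only [Finset.mem_inter] at h
      exact h t ⟨ht, ht'⟩
    · left
      intro x hx
      rw [Finset.ext_iff] at h
      simp only [Finset.mem_inter] at h
      exact ((h x).mpr hx).2
    · right
      intro x hx
      rw [Finset.ext_iff] at h
      simp only [Finset.mem_inter] at h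
      exact ((h x).mpr hx).1
  set FA : Finset (Finset (Fin n)) :=
    Finset.univ.filter (fun J => J ∈ ℋ ∧ a' ∈ J ∧ a ∉ J) with hFA
  set FB : Finset (Finset (Fin n)) :=
    Finset.univ.filter (fun J => J ∈ ℋ ∧ a ∈ J ∧ a' ∉ J) with hFB
  have hmemA : ∀ J, J ∈ FA ↔ J ∈ ℋ ∧ a' ∈ J ∧ a ∉ J := by
    intro J; simp [hFA]
  have hmemB : ∀ J, J ∈ FB ↔ J ∈ ℋ ∧ a ∈ J ∧ a' ∉ J := by
    intro J; simp [hFB]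
  have hA : {J | J ∈ ℋ ∧ a' ∈ J ∧ a ∉ J}.ncard = FA.card := by
    rw [Set.ncard_eq_toFinset_card']
    congr 1
    ext J; simp only [Set.mem_toFinset, Set.mem_setOf_eq, hFA, Finset.mem_filter, Finset.mem_univ, true_and]
  have hB : {J | J ∈ ℋ ∧ a ∈ J ∧ a' ∉ J}.ncard = FB.card := by
    rw [Set.ncard_eq_toFinset_card']
    congr 1
    ext J; simp only [Set.mem_toFinset, Set.mem_setOf_eq, hFB, Finset.mem_filter, Finset.mem_univ, true_and]
  rw [hA, hB]
  -- injectivity of card on each chain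
  have injA : Set.InjOn Finset.card (↑FA : Set (Finset (Fin n))) := by
    intro J hJ J' hJ' hcardeq
    have hJm := (hmemA J).mp hJ
    have hJ'm := (hmemA J').mp hJ'
    rcases chain a' J hJm.1 J' hJ'm.1 hJm.2.1 hJ'm.2.1 with h | h
    · exact Finset.eq_of_subset_of_card_le h (le_of_eq hcardeq.symm)
    · exact (Finset.eq_of_subset_of_card_le h (le_of_eq hcardeq)).symm
  have injB : Set.InjOn Finset.card (↑FB : Set (Finset (Fin n))) := by
    intro J hJ J' hJ' hcardeq
    have hJm := (hmemB J).mp hJ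
    have hJ'm := (hmemB J').mp hJ'
    rcases chain a J hJm.1 J' hJ'm.1 hJm.2.1 hJ'm.2.1 with h | h
    · exact Finset.eq_of_subset_of_card_le h (le_of_eq hcardeq.symm)
    · exact (Finset.eq_of_subset_of_card_le h (le_of_eq hcardeq)).symm
  have boundA : ∀ J ∈ FA, J.card ≤ n - 1 := by
    intro J hJ
    have hJm := (hmemA J).mp hJ
    have : J ⊆ Finset.univ.erase a := fun x hx =>
      Finset.mem_erase.mpr ⟨fun h => hJm.2.2 (h ▸ hx), Finset.mem_univ x⟩
    have := Finset.card_le_card this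
    simpa [Finset.card_erase_of_mem, Finset.card_univ] using this
  have boundB : ∀ J ∈ FB, J.card ≤ n - 1 := by
    intro J hJ
    have hJm := (hmemB J).mp hJ
    have : J ⊆ Finset.univ.erase a' := fun x hx =>
      Finset.mem_erase.mpr ⟨fun h => hJm.2.2 (h ▸ hx), Finset.mem_univ x⟩
    have := Finset.card_le_card this
    simpa [Finset.card_erase_of_mem, Finset.card_univ] using this
  have cardBound : ∀ (F : Finset (Finset (Fin n))) (m : ℕ),
      Set.InjOn Finset.card (↑F : Set (Finset (Fin n))) → (∀ J ∈ F, J.card ≤ m) →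
      (∀ J ∈ F, 2 ≤ J.card) → F.card ≤ m + 1 - 2 := by
    intro F m hinj hub hlb
    have : F.card ≤ (Finset.Icc 2 m).card := by
      apply Finset.card_le_card_of_injOn (f := Finset.card)
      · intro J hJ
        exact Finset.mem_Icc.mpr ⟨hlb J hJ, hub J hJ⟩
      · exact fun x hx y hy => hinj (by simpa using hx) (by simpa using hy)
    simpa [Nat.card_Icc] using this
  have hlbA : ∀ J ∈ FA, 2 ≤ J.card := fun J hJ => hcard J ((hmemA J).mp hJ).1
  have hlbB : ∀ J ∈ FB, 2 ≤ J.card := fun J hJ => hcard J ((hmemB J).mp hJ).1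
  rcases Finset.eq_empty_or_nonempty FA with hAe | hAne
  · have := cardBound FB (n - 1) injB boundB hlbB
    simp [hAe]
    omega
  rcases Finset.eq_empty_or_nonempty FB with hBe | hBne
  · have := cardBound FA (n - 1) injA boundA hlbA
    simp [hBe]
    omega
  -- both nonempty: take maximal elements
  obtain ⟨MA, hMA, hMAmax⟩ := Finset.exists_max_image FA Finset.card hAne
  obtain ⟨MB, hMB, hMBmax⟩ := Finset.exists_max_image FB Finset.card hBne
  have hMAm := (hmemA MA).mp hMA
  have hMBm := (hmemB MB).mp hMB
  have subA : ∀ J ∈ FA, J.card ≤ MA.card := fun J hJ => hMAmax J hJ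
  have subB : ∀ J ∈ FB, J.card ≤ MB.card := fun J hJ => hMBmax J hJ
  have hdisj : Disjoint MA MB := by
    rcases hH MA hMAm.1 MB hMBm.1 with h | h | h
    · rw [Finset.eq_empty_iff_forall_notMem] at h
      simp only [Finset.mem_inter] at h
      exact Finset.disjoint_left.mpr fun {x} hx hy => h x ⟨hx, hy⟩
    · exfalso
      rw [Finset.ext_iff] at h
      simp only [Finset.mem_inter] at h
      exact hMBm.2.2 ((h a').mpr hMAm.2.1).2
    · exfalso
      rw [Finset.ext_iff] at h
      simp only [Finset.mem_inter] at h
      exact hMAm.2.2 ((h a).mpr hMBm.2.1).1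
  have hsum : MA.card + MB.card ≤ n := by
    have := Finset.card_le_card (Finset.subset_univ (MA ∪ MB))
    rw [Finset.card_union_of_disjoint hdisj] at this
    simpa using this
  have h1 := cardBound FA MA.card injA subA hlbA
  have h2 := cardBound FB MB.card injB subB hlbB
  have := hlbA MA hMA
  have := hlbB MB hMB
  omega

end
end

section
/- Let k,n ∈ ℕ with 2 ≤ k ≤ n−2, and let 𝒫=(P,w) be a weighted tree with L(P)=[n]. If i,j ∈ [n] are neighbours, then D_{{i}∪X}(𝒫) − D_{{j}∪X}(𝒫) does not depend on the choice of X ∈ ([n]−{i,j} choose k−1). -/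
open scoped Classical
open Finset

noncomputable section

section AuxProof

open SimpleGraph

variable {V : Type} {G : SimpleGraph V}

private lemma aux_append_isPath {a b c : V} {p : G.Walk a b} {q : G.Walk b c}
    (hp : p.IsPath) (hq : q.IsPath)
    (h : ∀ u, u ∈ p.support → u ∈ q.support → u = b) : (p.append q).IsPath := by
  rw [Walk.isPath_def, Walk.support_append, List.nodup_append]
  have hq' : q.support = b :: q.support.tail := q.support_eq_cons
  have hqt : q.support.tail.Nodup := by
    have := hq.support_nodup
    rw [hq'] at this
    exact this.of_cons
  have hbt : b ∉ q.support.tail := by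
    have := hq.support_nodup
    rw [hq'] at this
    exact (List.nodup_cons.mp this).1
  refine ⟨hp.support_nodup, hqt, ?_⟩
  intro u hu u' hu' hne
  rw [← hne] at hu'
  have : u = b := h u hu (List.mem_of_mem_tail hu')
  exact hbt (this ▸ hu')

private lemma aux_path_unique (hG : G.IsAcyclic) {a b : V} {p q : G.Walk a b}
    (hp : p.IsPath) (hq : q.IsPath) : p = q := by
  have := SimpleGraph.isAcyclic_iff_path_unique.mp hG (⟨p, hp⟩ : G.Path a b) ⟨q, hq⟩
  exact congrArg Subtype.val this

private lemma aux_mem_edges_of_walk (hG : G.IsAcyclic) {a b : V} {p : G.Walk a b}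
    (hp : p.IsPath) {e : Sym2 V} (he : e ∈ p.edges) (q : G.Walk a b) : e ∈ q.edges := by
  have hb : q.bypass = p := aux_path_unique hG q.bypass_isPath hp
  exact q.edges_bypass_subset (hb ▸ he)

private lemma aux_interior {a b : V} (p : G.Walk a b) (hp : p.IsPath) {m : V}
    (hm : m ∈ p.support) (ha : m ≠ a) (hb : m ≠ b) :
    ∃ u1 u2, u1 ≠ u2 ∧ G.Adj m u1 ∧ G.Adj m u2 ∧ u1 ∈ p.support ∧ u2 ∈ p.support := by
  obtain ⟨u1, h1, t1, ht1⟩ := Walk.exists_eq_cons_of_ne ha ((p.takeUntil m hm).reverse)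
  obtain ⟨u2, h2, t2, ht2⟩ := Walk.exists_eq_cons_of_ne hb (p.dropUntil m hm)
  have hu1 : u1 ∈ (p.takeUntil m hm).support := by
    have : u1 ∈ (p.takeUntil m hm).reverse.support := by
      rw [ht1, Walk.support_cons]
      exact List.mem_cons_of_mem _ t1.start_mem_support
    rwa [Walk.support_reverse, List.mem_reverse] at this
  have hu2t : u2 ∈ (p.dropUntil m hm).support.tail := by
    rw [ht2, Walk.support_cons]
    exact t2.start_mem_support
  have hnd := hp.support_nodup
  rw [← Walk.take_spec p hm, Walk.support_append, List.nodup_append] at hnd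
  exact ⟨u1, u2, fun h => hnd.2.2 u1 hu1 u2 hu2t h, h1, h2,
    Walk.support_takeUntil_subset p hm hu1,
    Walk.support_dropUntil_subset p hm (List.mem_of_mem_tail hu2t)⟩

private lemma aux_descend {S : Set V} :
    ∀ {c d : V} (r : G.Walk c d), r.IsPath → d ∈ S → c ∉ S →
      ∃ m ∈ S, ∃ tw : G.Walk m c, tw.IsPath ∧
        (∀ u ∈ tw.support, u ∈ S → u = m) ∧ ∀ u ∈ tw.support, u ∈ r.support := by
  intro c d r
  induction r with
  | nil => exact fun _ hd hc => absurd hd hc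
  | @cons c c' d h r' ih =>
    intro hr hd hc
    have hr' : r'.IsPath := ((Walk.cons_isPath_iff h r').mp hr).1
    have hcn : c ∉ r'.support := ((Walk.cons_isPath_iff h r').mp hr).2
    by_cases hc' : c' ∈ S
    · refine ⟨c', hc', Walk.cons h.symm Walk.nil, ?_, ?_, ?_⟩
      · rw [Walk.isPath_def, Walk.support_cons, Walk.support_nil]
        simp [h.ne']
      · intro u hu huS
        simp only [Walk.support_cons, Walk.support_nil, List.mem_cons,
          List.mem_singleton, List.not_mem_nil, or_false] at hu
        rcases hu with rfl | rfl
        · rfl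
        · exact absurd huS hc
      · intro u hu
        simp only [Walk.support_cons, Walk.support_nil, List.mem_cons,
          List.mem_singleton, List.not_mem_nil, or_false] at hu
        rw [Walk.support_cons]
        rcases hu with rfl | rfl
        · exact List.mem_cons_of_mem _ r'.start_mem_support
        · exact List.mem_cons_self
    · obtain ⟨m, hm, tw, htw, hprop, hsub⟩ := ih hr' hd hc'
      have hcnt : c ∉ tw.support := fun hmem => hcn (hsub c hmem)
      refine ⟨m, hm, tw.append (Walk.cons h.symm Walk.nil), ?_, ?_, ?_⟩
      · refine aux_append_isPath htw ?_ ?_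
        · rw [Walk.isPath_def, Walk.support_cons, Walk.support_nil]
          simp [h.ne']
        · intro u hu hu'
          simp only [Walk.support_cons, Walk.support_nil, List.mem_cons,
            List.mem_singleton, List.not_mem_nil, or_false] at hu'
          rcases hu' with rfl | rfl
          · rfl
          · exact absurd hu hcnt
      · intro u hu huS
        rw [Walk.support_append] at hu
        rcases List.mem_append.mp hu with hu | hu
        · exact hprop u hu huS
        · simp only [Walk.support_cons, Walk.support_nil, List.tail_cons,
            List.mem_singleton] at hu
          subst hu
          exact absurd huS hc
      · intro u hu
        rw [Walk.support_append] at hu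
        rw [Walk.support_cons]
        rcases List.mem_append.mp hu with hu | hu
        · exact List.mem_cons_of_mem _ (hsub u hu)
        · simp only [Walk.support_cons, Walk.support_nil, List.tail_cons,
            List.mem_singleton] at hu
          subst hu
          exact List.mem_cons_self

private lemma main_split {n : ℕ} (T : WTree (Fin n)) (hac : T.G.IsAcyclic)
    {v : T.V} {S : Set T.V} {i j : Fin n} (ii : Fin n)
    (qa : T.G.Walk (T.label ii) v) (hqa : qa.IsPath) (hqaS : ∀ u ∈ qa.support, u ∈ S)
    (t : ∀ x : Fin n, T.G.Walk v (T.label x))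
    (ht : ∀ x : Fin n, x ≠ i → x ≠ j →
      (t x).IsPath ∧ ∀ u ∈ (t x).support, u ∈ S → u = v)
    (X : Finset (Fin n)) (hX : X.Nonempty) (hiX : i ∉ X) (hjX : j ∉ X) :
    T.D (insert ii X) =
      (∑ e ∈ (Finset.univ : Finset (Sym2 T.V)), if e ∈ qa.edges then T.w e else 0) +
      (∑ e ∈ (Finset.univ : Finset (Sym2 T.V)),
        if ∃ x ∈ X, e ∈ (t x).edges then T.w e else 0) := by
  have hxi : ∀ x ∈ X, x ≠ i := fun x hx h => hiX (h ▸ hx)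
  have hxj : ∀ x ∈ X, x ≠ j := fun x hx h => hjX (h ▸ hx)
  have htp : ∀ x ∈ X, (t x).IsPath := fun x hx => (ht x (hxi x hx) (hxj x hx)).1
  have htS : ∀ x ∈ X, ∀ u ∈ (t x).support, u ∈ S → u = v :=
    fun x hx => (ht x (hxi x hx) (hxj x hx)).2
  have happ : ∀ x ∈ X, (qa.append (t x)).IsPath := fun x hx =>
    aux_append_isPath hqa (htp x hx) (fun u hu hu' => htS x hx u hu' (hqaS u hu))
  have hmem : ∀ a, a ∈ (insert ii X).image T.label ↔
      a = T.label ii ∨ ∃ x ∈ X, a = T.label x := by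
    intro a
    constructor
    · intro h
      obtain ⟨x, hx, rfl⟩ := Finset.mem_image.mp h
      rcases Finset.mem_insert.mp hx with rfl | hx
      · exact Or.inl rfl
      · exact Or.inr ⟨x, hx, rfl⟩
    · rintro (rfl | ⟨x, hx, rfl⟩)
      · exact Finset.mem_image_of_mem _ (Finset.mem_insert_self _ _)
      · exact Finset.mem_image_of_mem _ (Finset.mem_insert_of_mem hx)
  simp only [WTree.D, treeWeight]
  rw [← Finset.sum_add_distrib]
  refine Finset.sum_congr rfl fun e _ => ?_
  have hnab : ¬ (e ∈ qa.edges ∧ ∃ x ∈ X, e ∈ (t x).edges) := by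
    rintro ⟨hA, x, hx, hB⟩
    have hnd := (happ x hx).isTrail.edges_nodup
    rw [Walk.edges_append, List.nodup_append] at hnd
    exact hnd.2.2 e hA e hB rfl
  have hcond : (e ∈ T.G.edgeSet ∧ ∃ a ∈ (insert ii X).image T.label,
        ∃ b ∈ (insert ii X).image T.label, ∀ p : T.G.Walk a b, e ∈ p.edges) ↔
      (e ∈ qa.edges ∨ ∃ x ∈ X, e ∈ (t x).edges) := by
    constructor
    · rintro ⟨-, a, ha, b, hb, hall⟩
      rcases (hmem a).mp ha with rfl | ⟨x₁, hx₁, rfl⟩ <;>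
        rcases (hmem b).mp hb with rfl | ⟨x₂, hx₂, rfl⟩
      · have := hall Walk.nil
        rw [Walk.edges_nil] at this
        exact absurd this List.not_mem_nil
      · have := hall (qa.append (t x₂))
        rw [Walk.edges_append, List.mem_append] at this
        rcases this with h | h
        · exact Or.inl h
        · exact Or.inr ⟨x₂, hx₂, h⟩
      · have := hall (qa.append (t x₁)).reverse
        rw [Walk.edges_reverse, List.mem_reverse, Walk.edges_append, List.mem_append] at this
        rcases this with h | h
        · exact Or.inl h
        · exact Or.inr ⟨x₁, hx₁, h⟩
      · have := hall ((t x₁).reverse.append (t x₂))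
        rw [Walk.edges_append, Walk.edges_reverse, List.mem_append, List.mem_reverse] at this
        rcases this with h | h
        · exact Or.inr ⟨x₁, hx₁, h⟩
        · exact Or.inr ⟨x₂, hx₂, h⟩
    · have key : ∀ x ∈ X, e ∈ (qa.append (t x)).edges →
          e ∈ T.G.edgeSet ∧ ∃ a ∈ (insert ii X).image T.label,
            ∃ b ∈ (insert ii X).image T.label, ∀ p : T.G.Walk a b, e ∈ p.edges := by
        intro x hx he
        exact ⟨(qa.append (t x)).edges_subset_edgeSet he,
          T.label ii, (hmem _).mpr (Or.inl rfl),
          T.label x, (hmem _).mpr (Or.inr ⟨x, hx, rfl⟩),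
          fun q => aux_mem_edges_of_walk hac (happ x hx) he q⟩
      rintro (hA | ⟨x, hx, hB⟩)
      · obtain ⟨x₀, hx₀⟩ := hX
        exact key x₀ hx₀ (by rw [Walk.edges_append]; exact List.mem_append_left _ hA)
      · exact key x hx (by rw [Walk.edges_append]; exact List.mem_append_right _ hB)
  by_cases hA : e ∈ qa.edges <;> by_cases hB : ∃ x ∈ X, e ∈ (t x).edges
  · exact absurd ⟨hA, hB⟩ hnab
  · rw [if_pos (hcond.mpr (Or.inl hA)), if_pos hA, if_neg hB, add_zero]
  · rw [if_pos (hcond.mpr (Or.inr hB)), if_neg hA, if_pos hB, zero_add]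
  · rw [if_neg (fun h => (hcond.mp h).elim hA hB), if_neg hA, if_neg hB, add_zero]

end AuxProof

open SimpleGraph in
/-- **Proposition (1.1).** Let `2 ≤ k ≤ n-2` and let `𝒫 = (P,w)` be a weighted tree
with `L(P) = [n]`. If `i, j ∈ [n]` are neighbours, then `D_{i,X} - D_{j,X}` does not
depend on `X ∈ ([n]-{i,j} choose k-1)`. -/
theorem neighbours_diff_indep (n k : ℕ) (hk2 : 2 ≤ k) (hkn : k ≤ n - 2)
    (T : WTree (Fin n)) (i j : Fin n) (hnb : T.LeafNbr i j) :
    ∀ X X' : Finset (Fin n),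
      X.card = k - 1 → i ∉ X → j ∉ X → X'.card = k - 1 → i ∉ X' → j ∉ X' →
      T.D (insert i X) - T.D (insert j X) =
        T.D (insert i X') - T.D (insert j X') := by
  intro X X' hXc hiX hjX hX'c hiX' hjX'
  classical
  obtain ⟨hne, p, hp, hcard⟩ := hnb
  have hac := T.isTree.IsAcyclic
  have hconn := T.isTree.isConnected
  have hleaf : ∀ x : Fin n, (T.G.neighborSet (T.label x)).ncard = 1 :=
    fun x => (T.leaf_iff _).mpr ⟨x, rfl⟩
  obtain ⟨v, hvfil⟩ := Finset.card_eq_one.mp hcard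
  have hvmem' := Finset.mem_filter.mp (hvfil ▸ Finset.mem_singleton_self v)
  have hv : v ∈ p.support := List.mem_toFinset.mp hvmem'.1
  have hvnode : T.IsNode v := hvmem'.2
  have huniq : ∀ u ∈ p.support, T.IsNode u → u = v := by
    intro u hu hun
    have : u ∈ p.support.toFinset.filter (fun w => T.IsNode w) :=
      Finset.mem_filter.mpr ⟨List.mem_toFinset.mpr hu, hun⟩
    rw [hvfil] at this
    exact Finset.mem_singleton.mp this
  have hlab_end : ∀ x : Fin n, T.label x ∈ p.support →
      T.label x = T.label i ∨ T.label x = T.label j := by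
    intro x hx
    by_contra hcon
    push_neg at hcon
    obtain ⟨u1, u2, h12, ha1, ha2, -, -⟩ := aux_interior p hp hx hcon.1 hcon.2
    have h1 : 1 < (T.G.neighborSet (T.label x)).ncard :=
      (Set.one_lt_ncard (Set.toFinite _)).mpr
        ⟨u1, ha1, u2, ha2, h12⟩
    rw [hleaf x] at h1
    omega
  have hkey : ∀ x : Fin n, x ≠ i → x ≠ j →
      ∃ t : T.G.Walk v (T.label x), t.IsPath ∧
        ∀ u ∈ t.support, u ∈ p.support → u = v := by
    intro x hxi hxj
    have hlx : T.label x ∉ p.support := by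
      intro hmem
      rcases hlab_end x hmem with h | h
      · exact hxi (T.label_inj h)
      · exact hxj (T.label_inj h)
    obtain ⟨w0⟩ := hconn.preconnected (T.label x) (T.label i)
    obtain ⟨m, hmS, tw, htp, htprop, -⟩ :=
      aux_descend (S := {u | u ∈ p.support}) w0.bypass w0.bypass_isPath
        p.start_mem_support hlx
    have hmp : m ∈ p.support := hmS
    have hmne : m ≠ T.label x := fun h => hlx (h ▸ hmp)
    obtain ⟨ut, hut, tt, rfl⟩ := Walk.exists_eq_cons_of_ne hmne tw
    have hutm : ut ≠ m := by
      intro h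
      exact ((Walk.cons_isPath_iff hut tt).mp htp).2 (h ▸ tt.start_mem_support)
    have hutS : ut ∉ p.support := by
      intro h
      exact hutm (htprop ut
        (by rw [Walk.support_cons]; exact List.mem_cons_of_mem _ tt.start_mem_support) h)
    have hmv : m = v := by
      by_cases hmi : m = T.label i
      · exfalso
        obtain ⟨up, hup, pp, hpeq⟩ := Walk.exists_eq_cons_of_ne hne p
        have hupS : up ∈ p.support := by
          rw [hpeq, Walk.support_cons]
          exact List.mem_cons_of_mem _ pp.start_mem_support
        have h1 : 1 < (T.G.neighborSet (T.label i)).ncard :=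
          (Set.one_lt_ncard (Set.toFinite _)).mpr
            ⟨up, hup, ut, hmi ▸ hut, fun hq => hutS (hq ▸ hupS)⟩
        rw [hleaf i] at h1
        omega
      · by_cases hmj : m = T.label j
        · exfalso
          obtain ⟨up, hup, pp, hpeq⟩ := Walk.exists_eq_cons_of_ne hne.symm p.reverse
          have hupS : up ∈ p.support := by
            have : up ∈ p.reverse.support := by
              rw [hpeq, Walk.support_cons]
              exact List.mem_cons_of_mem _ pp.start_mem_support
            rwa [Walk.support_reverse, List.mem_reverse] at this
          have h1 : 1 < (T.G.neighborSet (T.label j)).ncard :=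
            (Set.one_lt_ncard (Set.toFinite _)).mpr
              ⟨up, hup, ut, hmj ▸ hut, fun hq => hutS (hq ▸ hupS)⟩
          rw [hleaf j] at h1
          omega
        · obtain ⟨u1, u2, h12, ha1, ha2, hu1p, hu2p⟩ := aux_interior p hp hmp hmi hmj
          have hnode : T.IsNode m := by
            have h2 : 2 < (T.G.neighborSet m).ncard :=
              (Set.two_lt_ncard (Set.toFinite _)).mpr
                ⟨u1, ha1, u2, ha2, ut, hut, h12,
                  fun hq => hutS (hq ▸ hu1p), fun hq => hutS (hq ▸ hu2p)⟩
            exact h2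
          exact huniq m hmp hnode
    subst hmv
    exact ⟨Walk.cons hut tt, htp, fun u hu hup => htprop u hu hup⟩
  have hkey2 : ∀ x : Fin n, ∃ t : T.G.Walk v (T.label x),
      x ≠ i → x ≠ j → (t.IsPath ∧ ∀ u ∈ t.support, u ∈ p.support → u = v) := by
    intro x
    by_cases hxi : x = i
    · obtain ⟨w0⟩ := hconn.preconnected v (T.label x)
      exact ⟨w0, fun h => absurd hxi h⟩
    · by_cases hxj : x = j
      · obtain ⟨w0⟩ := hconn.preconnected v (T.label x)
        exact ⟨w0, fun _ h => absurd hxj h⟩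
      · obtain ⟨t, h1, h2⟩ := hkey x hxi hxj
        exact ⟨t, fun _ _ => ⟨h1, h2⟩⟩
  choose t ht using hkey2
  have hq1p : (p.takeUntil v hv).IsPath := hp.takeUntil hv
  have hq1S : ∀ u ∈ (p.takeUntil v hv).support, u ∈ ({u | u ∈ p.support} : Set T.V) :=
    fun u hu => Walk.support_takeUntil_subset _ hv hu
  have hq2p : ((p.dropUntil v hv).reverse).IsPath := (hp.dropUntil hv).reverse
  have hq2S : ∀ u ∈ ((p.dropUntil v hv).reverse).support,
      u ∈ ({u | u ∈ p.support} : Set T.V) := by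
    intro u hu
    rw [Walk.support_reverse, List.mem_reverse] at hu
    exact Walk.support_dropUntil_subset _ hv hu
  have ht' : ∀ x : Fin n, x ≠ i → x ≠ j →
      (t x).IsPath ∧ ∀ u ∈ (t x).support, u ∈ ({u | u ∈ p.support} : Set T.V) → u = v :=
    fun x h1 h2 => ht x h1 h2
  have hXne : X.Nonempty := Finset.card_pos.mp (by rw [hXc]; omega)
  have hX'ne : X'.Nonempty := Finset.card_pos.mp (by rw [hX'c]; omega)
  rw [main_split T hac i (p.takeUntil v hv) hq1p hq1S t ht' X hXne hiX hjX,
    main_split T hac j ((p.dropUntil v hv).reverse) hq2p hq2S t ht' X hXne hiX hjX,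
    main_split T hac i (p.takeUntil v hv) hq1p hq1S t ht' X' hX'ne hiX' hjX',
    main_split T hac j ((p.dropUntil v hv).reverse) hq2p hq2S t ht' X' hX'ne hiX' hjX']
  ring


end
end

section
/- Let k,n ∈ ℕ with 2 ≤ k ≤ n−2, and let 𝒫=(P,w) be an internal-nonzero-weighted essential pseudostar of kind (n,k) with L(P)=[n]. If i,j ∈ [n] are such that D_{{i}∪X}(𝒫) − D_{{j}∪X}(𝒫) does not depend on the choice of X ∈ ([n]−{i,j} choose k−1), then i and j are neighbours. -/
open scoped Classical
open Finset

noncomputable section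

namespace DINAux

open SimpleGraph

variable {V : Type} {G : SimpleGraph V}

/-- Two vertices are on the same side of (i.e. still connected after deleting) `e`. -/
def Rel (G : SimpleGraph V) (e : Sym2 V) (a b : V) : Prop :=
  (G.deleteEdges {e}).Reachable a b

lemma rel_refl (e : Sym2 V) (a : V) : Rel G e a a := Reachable.refl a

lemma rel_symm {e : Sym2 V} {a b : V} (h : Rel G e a b) : Rel G e b a :=
  Reachable.symm h

lemma rel_trans {e : Sym2 V} {a b c : V} (h : Rel G e a b) (h' : Rel G e b c) :
    Rel G e a c := Reachable.trans h h'

lemma not_rel_iff_forall_walk {a b : V} {e : Sym2 V} :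
    ¬ Rel G e a b ↔ ∀ p : G.Walk a b, e ∈ p.edges := by
  constructor
  · intro h p
    by_contra he
    exact h ⟨p.toDeleteEdges {e} (fun e' he' => by
      simp only [Set.mem_singleton_iff]
      rintro rfl; exact he he')⟩
  · rintro h ⟨q⟩
    have hq : ∀ e' ∈ q.edges, e' ∈ G.edgeSet := fun e' he' => by
      have h2 := q.edges_subset_edgeSet he'
      rw [SimpleGraph.edgeSet_deleteEdges] at h2
      exact h2.1
    have h3 := h (q.transfer G hq)
    rw [SimpleGraph.Walk.edges_transfer] at h3
    have h4 := q.edges_subset_edgeSet h3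
    rw [SimpleGraph.edgeSet_deleteEdges] at h4
    exact h4.2 rfl

lemma not_rel_edge (hG : G.IsAcyclic) {a b : V} (h : G.Adj a b) :
    ¬ Rel G s(a, b) a b :=
  (SimpleGraph.isBridge_iff.mp
    (SimpleGraph.isAcyclic_iff_forall_adj_isBridge.mp hG h))

lemma rel_of_adj {a b : V} (h : G.Adj a b) {e : Sym2 V} (hne : e ≠ s(a, b)) :
    Rel G e a b :=
  SimpleGraph.Adj.reachable (by
    rw [SimpleGraph.deleteEdges_adj]
    exact ⟨h, by simp only [Set.mem_singleton_iff]; exact fun hh => hne hh.symm⟩)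

lemma rel_dichotomy (hpre : G.Preconnected) (u v x : V) :
    Rel G s(u, v) u x ∨ Rel G s(u, v) v x := by
  obtain ⟨p⟩ := hpre x u
  clear hpre
  induction p with
  | nil => exact Or.inl (rel_refl _ _)
  | @cons a c u' h q ih =>
    by_cases hec : s(a, c) = s(u', v)
    · rw [Sym2.eq_iff] at hec
      rcases hec with ⟨rfl, rfl⟩ | ⟨rfl, rfl⟩
      · exact Or.inl (rel_refl _ _)
      · exact Or.inr (rel_refl _ _)
    · have hadj : Rel G s(u', v) a c := rel_of_adj h (Ne.symm hec)
      rcases ih with h1 | h1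
      · exact Or.inl (rel_trans h1 (rel_symm hadj))
      · exact Or.inr (rel_trans h1 (rel_symm hadj))

lemma not_rel_iff_mem_path (hG : G.IsTree) {a b : V} {p : G.Walk a b}
    (hp : p.IsPath) {e : Sym2 V} : ¬ Rel G e a b ↔ e ∈ p.edges := by
  constructor
  · intro h; exact not_rel_iff_forall_walk.mp h p
  · intro he hrel
    obtain ⟨q⟩ := hrel
    have hq : ∀ e' ∈ q.edges, e' ∈ G.edgeSet := fun e' he' => by
      have h2 := q.edges_subset_edgeSet he'
      rw [SimpleGraph.edgeSet_deleteEdges] at h2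
      exact h2.1
    have hqe : e ∉ (q.transfer G hq).edges := by
      rw [SimpleGraph.Walk.edges_transfer]
      intro hh
      have h4 := q.edges_subset_edgeSet hh
      rw [SimpleGraph.edgeSet_deleteEdges] at h4
      exact h4.2 rfl
    have huniq : (⟨p, hp⟩ : G.Path a b) = (q.transfer G hq).toPath :=
      hG.IsAcyclic.path_unique _ _
    have hPeq : p = ((q.transfer G hq).toPath : G.Walk a b) :=
      congrArg Subtype.val huniq
    exact hqe (SimpleGraph.Walk.edges_toPath_subset _ (hPeq ▸ he))

lemma walk_cons_of_ne {a b : V} (p : G.Walk a b) (h : a ≠ b) :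
    ∃ w, ∃ hadj : G.Adj a w, ∃ q : G.Walk w b, p = SimpleGraph.Walk.cons hadj q := by
  cases p with
  | nil => exact absurd rfl h
  | cons hadj q => exact ⟨_, hadj, q, rfl⟩

lemma leaf_not_mem_support {a b c : V} {p : G.Walk a b} (hp : p.IsPath)
    (hca : c ≠ a) (hcb : c ≠ b) (hdeg : (G.neighborSet c).ncard = 1) :
    c ∉ p.support := by
  classical
  intro hc
  obtain ⟨d, hd⟩ := Set.ncard_eq_one.mp hdeg
  have hspec := p.take_spec hc
  obtain ⟨w1, hw1adj, B', hB'⟩ := walk_cons_of_ne (p.dropUntil c hc) hcb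
  obtain ⟨w2, hw2adj, A'', hA''⟩ :=
    walk_cons_of_ne (p.takeUntil c hc).reverse hca
  have hw12 : w1 = w2 := by
    have h1 : w1 ∈ G.neighborSet c := hw1adj
    have h2 : w2 ∈ G.neighborSet c := hw2adj
    rw [hd, Set.mem_singleton_iff] at h1 h2
    rw [h1, h2]
  have hw1B : w1 ∈ (p.dropUntil c hc).support.tail := by
    rw [hB']
    simp [SimpleGraph.Walk.support_cons]
  have hw2A : w2 ∈ (p.takeUntil c hc).support := by
    have h5 : w2 ∈ (p.takeUntil c hc).reverse.support := by
      rw [hA'']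
      simp [SimpleGraph.Walk.support_cons]
    rwa [SimpleGraph.Walk.support_reverse, List.mem_reverse] at h5
  have hnd : ((p.takeUntil c hc).support ++ (p.dropUntil c hc).support.tail).Nodup := by
    rw [← SimpleGraph.Walk.support_append, hspec]
    exact (SimpleGraph.Walk.isPath_def _).mp hp
  exact ((List.nodup_append'.mp hnd).2.2) (hw12 ▸ hw2A) hw1B

lemma exists_subPath {s t : V} {q : G.Walk s t} (hq : q.IsPath) {u w : V}
    (hu : u ∈ q.support) (hw : w ∈ q.support) :
    ∃ r : G.Walk u w, r.IsPath ∧ ∀ e ∈ r.edges, e ∈ q.edges := by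
  classical
  by_cases huA : u ∈ (q.takeUntil w hw).support
  · refine ⟨(q.takeUntil w hw).dropUntil u huA, (hq.takeUntil hw).dropUntil huA,
      fun e he => ?_⟩
    exact q.edges_takeUntil_subset hw
      (((q.takeUntil w hw).edges_dropUntil_subset huA) he)
  · have huB : u ∈ (q.dropUntil w hw).support := by
      have h5 := hu
      rw [← q.take_spec hw, SimpleGraph.Walk.mem_support_append_iff] at h5
      tauto
    refine ⟨((q.dropUntil w hw).takeUntil u huB).reverse,
      ((hq.dropUntil hw).takeUntil huB).reverse, fun e he => ?_⟩
    rw [SimpleGraph.Walk.edges_reverse, List.mem_reverse] at he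
    exact q.edges_dropUntil_subset hw
      (((q.dropUntil w hw).edges_takeUntil_subset huB) he)

lemma hang_disjoint (hG : G.IsTree) {s t : V} {q : G.Walk s t} (hq : q.IsPath)
    {x w : V} {p : G.Walk x w} (hp : p.IsPath) (hw : w ∈ q.support)
    {y : V} (hfp : s(y, w) ∈ p.edges) (hfq : s(y, w) ∉ q.edges) :
    ∀ u, u ∈ p.support → u ∈ q.support → u = w := by
  classical
  intro u hup huq
  by_contra hne
  obtain ⟨r, hr, hre⟩ := exists_subPath hq huq hw
  have hB : (p.dropUntil u hup).IsPath := hp.dropUntil hup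
  have hsplitf : s(y, w) ∈ (p.takeUntil u hup).edges ∨
      s(y, w) ∈ (p.dropUntil u hup).edges := by
    rw [← List.mem_append, ← SimpleGraph.Walk.edges_append, p.take_spec hup]
    exact hfp
  rcases hsplitf with hfA | hfB
  · have hwA : w ∈ (p.takeUntil u hup).support :=
      SimpleGraph.Walk.snd_mem_support_of_mem_edges _ hfA
    have hwB : w ∈ (p.dropUntil u hup).support.tail := by
      have hwB' : w ∈ (p.dropUntil u hup).support :=
        SimpleGraph.Walk.end_mem_support _
      rw [SimpleGraph.Walk.support_eq_cons, List.mem_cons] at hwB'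
      rcases hwB' with h6 | h6
      · exact absurd h6.symm hne
      · exact h6
    have hnd : ((p.takeUntil u hup).support ++
        (p.dropUntil u hup).support.tail).Nodup := by
      rw [← SimpleGraph.Walk.support_append, p.take_spec hup]
      exact (SimpleGraph.Walk.isPath_def _).mp hp
    exact (List.nodup_append'.mp hnd).2.2 hwA hwB
  · have huniq : (⟨p.dropUntil u hup, hB⟩ : G.Path u w) = ⟨r, hr⟩ :=
      hG.IsAcyclic.path_unique _ _
    have hPeq : p.dropUntil u hup = r := congrArg Subtype.val huniq
    exact hfq (hre _ (hPeq ▸ hfB))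

lemma endpoint_edge_unique {a b : V} (p : G.Walk a b) :
    p.IsPath → ∀ (c c' : V), s(c, b) ∈ p.edges → s(c', b) ∈ p.edges → c = c' := by
  induction p with
  | nil => intro _ c c' h1 _; simp at h1
  | @cons uu dd b hadj q ih =>
    intro hp c c' h1 h2
    rw [SimpleGraph.Walk.edges_cons, List.mem_cons] at h1 h2
    have hq : q.IsPath := hp.of_cons
    have hub : uu ∉ q.support := ((SimpleGraph.Walk.cons_isPath_iff _ _).mp hp).2
    have hbu : b ≠ uu := fun hh => hub (hh ▸ SimpleGraph.Walk.end_mem_support q)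
    rcases h1 with h1 | h1 <;> rcases h2 with h2 | h2
    · rw [Sym2.eq_iff] at h1 h2
      rcases h1 with ⟨rfl, rfl⟩ | ⟨rfl, rfl⟩
      · rcases h2 with ⟨rfl, _⟩ | ⟨_, hh⟩
        · rfl
        · exact absurd hh hbu
      · exact absurd rfl hbu
    · rw [Sym2.eq_iff] at h1
      rcases h1 with ⟨rfl, rfl⟩ | ⟨rfl, rfl⟩
      · have hqnil : q = SimpleGraph.Walk.nil :=
          SimpleGraph.Walk.isPath_iff_eq_nil.mp hq
        rw [hqnil] at h2; simp at h2
      · exact absurd rfl hbu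
    · rw [Sym2.eq_iff] at h2
      rcases h2 with ⟨rfl, rfl⟩ | ⟨rfl, rfl⟩
      · have hqnil : q = SimpleGraph.Walk.nil :=
          SimpleGraph.Walk.isPath_iff_eq_nil.mp hq
        rw [hqnil] at h1; simp at h1
      · exact absurd rfl hbu
    · exact ih hq c c' h1 h2


lemma side_nested (hG : G.IsTree) {u y y' : V} (huy : G.Adj u y) (hyy' : G.Adj y y')
    (hne : y' ≠ u) {v : V} (hv : ¬ Rel G s(y, y') v y) : ¬ Rel G s(u, y) v u := by
  intro hvu
  obtain ⟨P0⟩ := hG.isConnected.preconnected v y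
  have hP : (P0.toPath : G.Walk v y).IsPath := P0.toPath.2
  have hf' : s(y, y') ∈ (P0.toPath : G.Walk v y).edges :=
    (not_rel_iff_mem_path hG hP).mp hv
  have hf : s(u, y) ∈ (P0.toPath : G.Walk v y).edges := by
    apply (not_rel_iff_mem_path hG hP).mp
    intro hvy
    exact (not_rel_edge hG.IsAcyclic huy) (rel_trans (rel_symm hvu) hvy)
  have hf'' : s(y', y) ∈ (P0.toPath : G.Walk v y).edges := by
    rwa [Sym2.eq_swap] at hf'
  exact hne (endpoint_edge_unique _ hP y' u hf'' hf)

lemma exists_leaf_side {V : Type} [Fintype V] {G : SimpleGraph V} (hG : G.IsTree)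
    {α : Type} (label : α → V)
    (hleaf : ∀ v, (G.neighborSet v).ncard = 1 ↔ v ∈ Set.range label) :
    ∀ u y, G.Adj u y → ∃ a : α, ¬ Rel G s(u, y) (label a) u := by
  have main : ∀ N : ℕ, ∀ u y, G.Adj u y → ({v | Rel G s(u, y) v y}.ncard ≤ N) →
      ∃ a, ¬ Rel G s(u, y) (label a) u := by
    intro N
    induction N with
    | zero =>
      intro u y h hcard
      exfalso
      have h1 : y ∈ {v | Rel G s(u, y) v y} := rel_refl _ _
      have h2 : 0 < {v | Rel G s(u, y) v y}.ncard :=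
        (Set.ncard_pos (Set.toFinite _)).mpr ⟨y, h1⟩
      omega
    | succ N ih =>
      intro u y h hcard
      by_cases hy : (G.neighborSet y).ncard = 1
      · obtain ⟨a, ha⟩ := (hleaf y).mp hy
        refine ⟨a, ?_⟩
        rw [ha]
        exact fun hr => not_rel_edge hG.IsAcyclic h (rel_symm hr)
      · have hexy' : ∃ y' ∈ G.neighborSet y, y' ≠ u := by
          by_contra hall
          push_neg at hall
          have hsub1 : G.neighborSet y ⊆ {u} := fun z hz => hall z hz
          have hle : (G.neighborSet y).ncard ≤ 1 := by
            have := Set.ncard_le_ncard hsub1 (Set.toFinite _)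
            simpa using this
          have hpos : 0 < (G.neighborSet y).ncard :=
            (Set.ncard_pos (Set.toFinite _)).mpr ⟨u, h.symm⟩
          omega
        obtain ⟨y', hy'mem, hy'ne⟩ := hexy'
        have hyy' : G.Adj y y' := hy'mem
        have hsub : {v | Rel G s(y, y') v y'} ⊆ {v | Rel G s(u, y) v y} := by
          intro v hv
          by_contra hvy
          have hvnf' : ¬ Rel G s(y, y') v y := fun hr =>
            (not_rel_edge hG.IsAcyclic hyy') (rel_trans (rel_symm hr) hv)
          have hnvu := side_nested hG h hyy' hy'ne hvnf'
          rcases rel_dichotomy hG.isConnected.preconnected u y v with h2 | h2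
          · exact hnvu (rel_symm h2)
          · exact hvy (rel_symm h2)
        have hlt : {v | Rel G s(y, y') v y'}.ncard < {v | Rel G s(u, y) v y}.ncard := by
          apply Set.ncard_lt_ncard _ (Set.toFinite _)
          refine ⟨hsub, fun hcontra => ?_⟩
          have h3 : y ∈ {v | Rel G s(u, y) v y} := rel_refl _ _
          have h4 := hcontra h3
          exact (not_rel_edge hG.IsAcyclic hyy') h4
        obtain ⟨a, ha⟩ := ih y y' hyy' (by omega)
        exact ⟨a, side_nested hG h hyy' hy'ne ha⟩
  intro u y h
  exact main ({v | Rel G s(u, y) v y}.ncard) u y h le_rfl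


lemma exists_third {S : Set V} (h : 2 < S.ncard) (a b : V) :
    ∃ y ∈ S, y ≠ a ∧ y ≠ b := by
  by_contra hall
  push_neg at hall
  have hsub : S ⊆ {a, b} := by
    intro z hz
    by_cases hza : z = a
    · exact Or.inl hza
    · exact Or.inr (hall z hz hza)
  have h1 := Set.ncard_le_ncard hsub ((Set.finite_singleton b).insert a)
  have h2 : ({a, b} : Set V).ncard ≤ 2 := by
    apply le_trans (Set.ncard_insert_le _ _)
    simp [Set.ncard_singleton]
  omega

lemma edge_at_start {u t : V} (r : G.Walk u t) :
    r.IsPath → ∀ z : V, s(u, z) ∈ r.edges →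
    ∃ r' : G.Walk z t, ∃ h : G.Adj u z, r = SimpleGraph.Walk.cons h r' := by
  cases r with
  | nil => intro _ z hmem; simp at hmem
  | @cons _ c _ hadj r'' =>
    intro hr z hmem
    rw [SimpleGraph.Walk.edges_cons, List.mem_cons] at hmem
    rcases hmem with he | he
    · rw [Sym2.eq_iff] at he
      rcases he with ⟨-, rfl⟩ | ⟨h1, rfl⟩
      · exact ⟨r'', hadj, rfl⟩
      · exact absurd h1 hadj.ne
    · exfalso
      have h2 : u ∈ r''.support := SimpleGraph.Walk.fst_mem_support_of_mem_edges r'' he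
      exact ((SimpleGraph.Walk.cons_isPath_iff _ _).mp hr).2 h2

end DINAux

/-- **Proposition (1.2).** Let `2 ≤ k ≤ n-2` and let `𝒫 = (P,w)` be an
internal-nonzero-weighted essential pseudostar of kind `(n,k)` with `L(P) = [n]`.
If for `i, j ∈ [n]` the quantity `D_{i,X} - D_{j,X}` does not depend on
`X ∈ ([n]-{i,j} choose k-1)`, then `i` and `j` are neighbours. -/
theorem diff_indep_neighbours (n k : ℕ) (hk2 : 2 ≤ k) (hkn : k ≤ n - 2)
    (T : WTree (Fin n)) (hess : T.IsEssential) (hinz : T.InternalNonzero)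
    (hps : T.IsPseudostar k) (i j : Fin n) (hij : i ≠ j)
    (hindep : ∀ X X' : Finset (Fin n),
      X.card = k - 1 → i ∉ X → j ∉ X → X'.card = k - 1 → i ∉ X' → j ∉ X' →
      T.D (insert i X) - T.D (insert j X) =
        T.D (insert i X') - T.D (insert j X')) :
    T.LeafNbr i j := by
  classical
  have hG : T.G.IsTree := T.isTree
  have hpre : T.G.Preconnected := hG.isConnected.preconnected
  have hn4 : 4 ≤ n := by omega
  by_contra hnbr
  have hleaf_i : (T.G.neighborSet (T.label i)).ncard = 1 := (T.leaf_iff _).mpr ⟨i, rfl⟩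
  have hleaf_j : (T.G.neighborSet (T.label j)).ncard = 1 := (T.leaf_iff _).mpr ⟨j, rfl⟩
  obtain ⟨v1, hv1⟩ := Set.ncard_eq_one.mp hleaf_i
  obtain ⟨vm, hvm⟩ := Set.ncard_eq_one.mp hleaf_j
  have hadj_iv1 : T.G.Adj (T.label i) v1 := by
    have h0 : v1 ∈ T.G.neighborSet (T.label i) := by rw [hv1]; exact rfl
    exact h0
  have hadj_jvm : T.G.Adj (T.label j) vm := by
    have h0 : vm ∈ T.G.neighborSet (T.label j) := by rw [hvm]; exact rfl
    exact h0
  have hlbij : T.label i ≠ T.label j := fun hh => hij (T.label_inj hh)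
  obtain ⟨l3, hl3i, hl3j⟩ : ∃ l : Fin n, l ≠ i ∧ l ≠ j := by
    have h2 : 0 < (Finset.univ \ ({i, j} : Finset (Fin n))).card := by
      have h1 : ({i, j} : Finset (Fin n)).card ≤ 2 := by
        apply le_trans (Finset.card_insert_le _ _); simp
      have h3 := Finset.le_card_sdiff ({i, j} : Finset (Fin n)) Finset.univ
      have h4 : (Finset.univ : Finset (Fin n)).card = n := by simp
      omega
    obtain ⟨l, hl⟩ := Finset.card_pos.mp h2
    rw [Finset.mem_sdiff, Finset.mem_insert, Finset.mem_singleton] at hl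
    exact ⟨l, fun h => hl.2 (Or.inl h), fun h => hl.2 (Or.inr h)⟩
  have hnode : ∀ (a b c : Fin n) (v : T.V), b ≠ a → c ≠ a → b ≠ c →
      T.G.neighborSet (T.label a) = {v} → 2 < (T.G.neighborSet v).ncard := by
    intro a b c v hba hca hbc hva
    have hadj : T.G.Adj (T.label a) v := by
      have h0 : v ∈ T.G.neighborSet (T.label a) := by rw [hva]; exact rfl
      exact h0
    by_contra hle
    push_neg at hle
    have hpos : 0 < (T.G.neighborSet v).ncard :=
      (Set.ncard_pos (Set.toFinite _)).mpr ⟨T.label a, hadj.symm⟩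
    have h1 : (T.G.neighborSet v).ncard = 1 := by have := hess v; omega
    obtain ⟨w, hw⟩ := Set.ncard_eq_one.mp h1
    have hwa : w = T.label a := by
      have h0 : T.label a ∈ T.G.neighborSet v := hadj.symm
      rw [hw, Set.mem_singleton_iff] at h0
      exact h0.symm
    have hclosed : ∀ (c' d : T.V) (p : T.G.Walk c' d),
        (d = T.label a ∨ d = v) → (c' = T.label a ∨ c' = v) := by
      intro c' d p
      induction p with
      | nil => exact id
      | @cons cx cy cd hadj' p' ih =>
        intro hd
        rcases ih hd with h | h
        · right
          have h0 : cx ∈ T.G.neighborSet (T.label a) := by rw [← h]; exact hadj'.symm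
          rw [hva, Set.mem_singleton_iff] at h0
          exact h0
        · left
          have h0 : cx ∈ T.G.neighborSet v := by rw [← h]; exact hadj'.symm
          rw [hw, Set.mem_singleton_iff] at h0
          rw [h0, hwa]
    have hb' : T.label b = v := by
      obtain ⟨p⟩ := hpre (T.label b) (T.label a)
      rcases hclosed _ _ p (Or.inl rfl) with h | h
      · exact absurd (T.label_inj h) hba
      · exact h
    have hc' : T.label c = v := by
      obtain ⟨p⟩ := hpre (T.label c) (T.label a)
      rcases hclosed _ _ p (Or.inl rfl) with h | h
      · exact absurd (T.label_inj h) hca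
      · exact h
    exact hbc (T.label_inj (hb'.trans hc'.symm))
  have hnodev1 : 2 < (T.G.neighborSet v1).ncard :=
    hnode i j l3 v1 (Ne.symm hij) hl3i (Ne.symm hl3j) hv1
  have hnodevm : 2 < (T.G.neighborSet vm).ncard :=
    hnode j i l3 vm hij hl3j (Ne.symm hl3i) hvm
  have hv1_ne_lbi : v1 ≠ T.label i := (hadj_iv1.ne).symm
  have hvm_ne_lbj : vm ≠ T.label j := (hadj_jvm.ne).symm
  have hv1_ne_lbj : v1 ≠ T.label j := by
    intro h; rw [h, hleaf_j] at hnodev1; omega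
  have hvm_ne_lbi : vm ≠ T.label i := by
    intro h; rw [h, hleaf_i] at hnodevm; omega
  by_cases hv1vm : v1 = vm
  · -- i and j are neighbours via v1
    apply hnbr
    have hadj_v1j : T.G.Adj v1 (T.label j) := by rw [hv1vm]; exact hadj_jvm.symm
    have hsupp : (SimpleGraph.Walk.cons hadj_iv1
        (SimpleGraph.Walk.cons hadj_v1j SimpleGraph.Walk.nil)).support
        = [T.label i, v1, T.label j] := rfl
    refine ⟨hlbij, SimpleGraph.Walk.cons hadj_iv1
      (SimpleGraph.Walk.cons hadj_v1j SimpleGraph.Walk.nil), ?_, ?_⟩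
    · rw [SimpleGraph.Walk.isPath_def, hsupp]
      refine List.nodup_cons.mpr ⟨?_, List.nodup_cons.mpr ⟨?_, List.nodup_singleton _⟩⟩
      · simp only [List.mem_cons, List.mem_singleton, List.not_mem_nil, or_false]
        push_neg
        exact ⟨Ne.symm hv1_ne_lbi, hlbij⟩
      · simp only [List.mem_singleton, List.not_mem_nil, or_false]
        exact hadj_v1j.ne
    · rw [hsupp]
      have hnotnode_i : ¬ T.IsNode (T.label i) := by
        unfold WTree.IsNode; rw [hleaf_i]; omega
      have hnotnode_j : ¬ T.IsNode (T.label j) := by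
        unfold WTree.IsNode; rw [hleaf_j]; omega
      have hyesnode : T.IsNode v1 := hnodev1
      have hfilter : ([T.label i, v1, T.label j].toFinset.filter
          fun v => T.IsNode v) = {v1} := by
        ext u
        simp only [List.toFinset_cons, List.toFinset_nil, insert_empty_eq,
          Finset.mem_filter, Finset.mem_insert, Finset.mem_singleton]
        constructor
        · rintro ⟨rfl | rfl | rfl, hu⟩
          · exact absurd hu hnotnode_i
          · rfl
          · exact absurd hu hnotnode_j
        · rintro rfl
          exact ⟨Or.inr (Or.inl rfl), hyesnode⟩
      rw [hfilter, Finset.card_singleton]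
  · -- main case : v1 ≠ vm
    obtain ⟨q0⟩ := hpre v1 vm
    obtain ⟨q, hq⟩ : ∃ p : T.G.Walk v1 vm, p.IsPath := ⟨q0.toPath.1, q0.toPath.2⟩
    obtain ⟨v2, h12, q', rfl⟩ := DINAux.walk_cons_of_ne q hv1vm
    have hq'path : q'.IsPath := ((SimpleGraph.Walk.cons_isPath_iff _ _).mp hq).1
    have hv1nq' : v1 ∉ q'.support := ((SimpleGraph.Walk.cons_isPath_iff _ _).mp hq).2
    have hestar_mem : s(v1, v2) ∈ T.G.edgeSet := h12
    have hnot12 : ¬ DINAux.Rel T.G s(v1, v2) v1 v2 :=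
      DINAux.not_rel_edge hG.IsAcyclic h12
    have hestar_nq' : s(v1, v2) ∉ q'.edges := fun hmem =>
      hv1nq' (SimpleGraph.Walk.fst_mem_support_of_mem_edges q' hmem)
    have hRv2vm : DINAux.Rel T.G s(v1, v2) v2 vm := by
      by_contra hcon
      exact hestar_nq' ((DINAux.not_rel_iff_mem_path hG hq'path).mp hcon)
    have hiq : T.label i ∉ (SimpleGraph.Walk.cons h12 q').support :=
      DINAux.leaf_not_mem_support hq (Ne.symm hv1_ne_lbi) (Ne.symm hvm_ne_lbi) hleaf_i
    have hjq : T.label j ∉ (SimpleGraph.Walk.cons h12 q').support :=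
      DINAux.leaf_not_mem_support hq (Ne.symm hv1_ne_lbj) (Ne.symm hvm_ne_lbj) hleaf_j
    have hv1q : v1 ∈ (SimpleGraph.Walk.cons h12 q').support :=
      SimpleGraph.Walk.start_mem_support _
    have hv2q : v2 ∈ (SimpleGraph.Walk.cons h12 q').support := by
      rw [SimpleGraph.Walk.support_cons]
      exact List.mem_cons_of_mem _ (SimpleGraph.Walk.start_mem_support _)
    have hv2_ne_lbi : v2 ≠ T.label i := fun h => hiq (h ▸ hv2q)
    have hv2_ne_lbj : v2 ≠ T.label j := fun h => hjq (h ▸ hv2q)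
    have hestar_q : s(v1, v2) ∈ (SimpleGraph.Walk.cons h12 q').edges := by
      rw [SimpleGraph.Walk.edges_cons]; exact List.mem_cons_self
    have hpij_inner : ((SimpleGraph.Walk.cons h12 q').concat hadj_jvm.symm).IsPath := by
      rw [SimpleGraph.Walk.isPath_def, SimpleGraph.Walk.support_concat,
        List.nodup_append']
      refine ⟨(SimpleGraph.Walk.isPath_def _).mp hq, List.nodup_singleton _, ?_⟩
      intro a ha hb
      rw [List.mem_singleton] at hb
      exact hjq (hb ▸ ha)
    have hpij : (SimpleGraph.Walk.cons hadj_iv1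
        ((SimpleGraph.Walk.cons h12 q').concat hadj_jvm.symm)).IsPath := by
      rw [SimpleGraph.Walk.cons_isPath_iff]
      refine ⟨hpij_inner, ?_⟩
      rw [SimpleGraph.Walk.support_concat, List.mem_append,
        List.mem_singleton]
      rintro (h | h)
      · exact hiq h
      · exact hlbij h
    have hestar_pij : s(v1, v2) ∈ (SimpleGraph.Walk.cons hadj_iv1
        ((SimpleGraph.Walk.cons h12 q').concat hadj_jvm.symm)).edges := by
      rw [SimpleGraph.Walk.edges_cons, SimpleGraph.Walk.edges_concat,
        List.concat_eq_append]
      exact List.mem_cons_of_mem _ (List.mem_append_left _ hestar_q)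
    have hnRij : ¬ DINAux.Rel T.G s(v1, v2) (T.label i) (T.label j) :=
      (DINAux.not_rel_iff_mem_path hG hpij).mpr hestar_pij
    -- choose y, a third neighbour of v1, and the leaf x hanging behind it
    obtain ⟨y, hymem, hy_ne_lbi, hy_ne_v2⟩ :=
      DINAux.exists_third hnodev1 (T.label i) v2
    have hyadj : T.G.Adj v1 y := hymem
    obtain ⟨x, hx⟩ := DINAux.exists_leaf_side hG T.label T.leaf_iff v1 y hyadj
    have hf_ne_estar : s(v1, y) ≠ s(v1, v2) := by
      rw [Ne, Sym2.eq_iff]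
      rintro (⟨-, h⟩ | ⟨h1, -⟩)
      · exact hy_ne_v2 h
      · exact h12.ne h1
    have hf_nq : s(v1, y) ∉ (SimpleGraph.Walk.cons h12 q').edges := by
      rw [SimpleGraph.Walk.edges_cons, List.mem_cons]
      rintro (h | h)
      · exact hf_ne_estar h
      · exact hv1nq' (SimpleGraph.Walk.fst_mem_support_of_mem_edges q' h)
    obtain ⟨px, hpx⟩ : ∃ p : T.G.Walk (T.label x) v1, p.IsPath := by
      obtain ⟨p0⟩ := hpre (T.label x) v1
      exact ⟨p0.toPath.1, p0.toPath.2⟩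
    have hf_px : s(y, v1) ∈ px.edges := by
      rw [Sym2.eq_swap]
      exact (DINAux.not_rel_iff_mem_path hG hpx).mp hx
    have hf_nq' : s(y, v1) ∉ (SimpleGraph.Walk.cons h12 q').edges := by
      rw [Sym2.eq_swap]; exact hf_nq
    have CLx : ∀ u, u ∈ px.support → u ∈ (SimpleGraph.Walk.cons h12 q').support → u = v1 :=
      DINAux.hang_disjoint hG hq hpx hv1q hf_px hf_nq'
    have hRf_i : DINAux.Rel T.G s(v1, y) (T.label i) v1 := by
      apply DINAux.rel_of_adj hadj_iv1
      rw [Ne, Sym2.eq_iff]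
      rintro (⟨h1, -⟩ | ⟨-, h2⟩)
      · exact hv1_ne_lbi h1
      · exact hy_ne_lbi h2
    have hx_ne_lbi : T.label x ≠ T.label i := fun h => hx (h ▸ hRf_i)
    have hRf_v1vm : DINAux.Rel T.G s(v1, y) v1 vm := by
      by_contra hcon
      exact hf_nq ((DINAux.not_rel_iff_mem_path hG hq).mp hcon)
    have hRf_j : DINAux.Rel T.G s(v1, y) (T.label j) v1 := by
      have h1 : DINAux.Rel T.G s(v1, y) (T.label j) vm := by
        apply DINAux.rel_of_adj hadj_jvm
        rw [Ne, Sym2.eq_iff]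
        rintro (⟨h1, -⟩ | ⟨h1, -⟩)
        · exact hv1_ne_lbj h1
        · exact hv1vm h1
      exact DINAux.rel_trans h1 (DINAux.rel_symm hRf_v1vm)
    have hx_ne_lbj : T.label x ≠ T.label j := fun h => hx (h ▸ hRf_j)
    -- choose y2, a suitable neighbour of v2, and the leaf z hanging behind it
    obtain ⟨y2, hy2adj, hy2_ne_lbj, hg_nq⟩ : ∃ y2 : T.V, T.G.Adj v2 y2 ∧
        y2 ≠ T.label j ∧ s(v2, y2) ∉ (SimpleGraph.Walk.cons h12 q').edges := by
      by_cases hv2vm : v2 = vm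
      · have hnodev2 : 2 < (T.G.neighborSet v2).ncard := by rw [hv2vm]; exact hnodevm
        obtain ⟨y2, hymem2, hne1, hne2⟩ := DINAux.exists_third hnodev2 v1 (T.label j)
        refine ⟨y2, hymem2, hne2, ?_⟩
        rw [SimpleGraph.Walk.edges_cons, List.mem_cons]
        rintro (h | h)
        · rw [Sym2.eq_iff] at h
          rcases h with ⟨h1, -⟩ | ⟨-, h2⟩
          · exact h12.ne h1.symm
          · exact hne1 h2
        · obtain ⟨r', hadj2, heq⟩ := DINAux.edge_at_start q' hq'path y2 h
          have h3 : v2 ∉ r'.support := by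
            rw [heq] at hq'path
            exact ((SimpleGraph.Walk.cons_isPath_iff _ _).mp hq'path).2
          apply h3
          rw [hv2vm]
          exact SimpleGraph.Walk.end_mem_support _
      · obtain ⟨v3, h23, q'', rfl⟩ := DINAux.walk_cons_of_ne q' hv2vm
        have hq''path : q''.IsPath := ((SimpleGraph.Walk.cons_isPath_iff _ _).mp hq'path).1
        have hv2nq'' : v2 ∉ q''.support := ((SimpleGraph.Walk.cons_isPath_iff _ _).mp hq'path).2
        have hv1_ne_v3 : v1 ≠ v3 := by
          intro h
          apply hv1nq'
          rw [SimpleGraph.Walk.support_cons, h]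
          exact List.mem_cons_of_mem _ (SimpleGraph.Walk.start_mem_support _)
        have hnodev2 : 2 < (T.G.neighborSet v2).ncard := by
          have h2lt : 1 < (T.G.neighborSet v2).ncard := by
            rw [Set.one_lt_ncard (Set.toFinite _)]
            exact ⟨v1, h12.symm, v3, h23, hv1_ne_v3⟩
          have := hess v2; omega
        obtain ⟨y2, hymem2, hne1, hne3⟩ := DINAux.exists_third hnodev2 v1 v3
        have hy2j : y2 ≠ T.label j := by
          intro h
          apply hv2vm
          have h0 : v2 ∈ T.G.neighborSet (T.label j) := by
            have h5 : T.G.Adj v2 y2 := hymem2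
            rw [h] at h5
            exact h5.symm
          rw [hvm, Set.mem_singleton_iff] at h0
          exact h0
        refine ⟨y2, hymem2, hy2j, ?_⟩
        rw [SimpleGraph.Walk.edges_cons, List.mem_cons]
        rintro (h | h)
        · rw [Sym2.eq_iff] at h
          rcases h with ⟨h1, -⟩ | ⟨-, h2⟩
          · exact h12.ne h1.symm
          · exact hne1 h2
        · rw [SimpleGraph.Walk.edges_cons, List.mem_cons] at h
          rcases h with h | h
          · rw [Sym2.eq_iff] at h
            rcases h with ⟨-, h2⟩ | ⟨h1, -⟩
            · exact hne3 h2
            · exact h23.ne h1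
          · exact hv2nq'' (SimpleGraph.Walk.fst_mem_support_of_mem_edges q'' h)
    obtain ⟨z, hz⟩ := DINAux.exists_leaf_side hG T.label T.leaf_iff v2 y2 hy2adj
    obtain ⟨pz, hpz⟩ : ∃ p : T.G.Walk (T.label z) v2, p.IsPath := by
      obtain ⟨p0⟩ := hpre (T.label z) v2
      exact ⟨p0.toPath.1, p0.toPath.2⟩
    have hg_pz : s(y2, v2) ∈ pz.edges := by
      rw [Sym2.eq_swap]
      exact (DINAux.not_rel_iff_mem_path hG hpz).mp hz
    have hg_nq' : s(y2, v2) ∉ (SimpleGraph.Walk.cons h12 q').edges := by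
      rw [Sym2.eq_swap]; exact hg_nq
    have CLz : ∀ u, u ∈ pz.support → u ∈ (SimpleGraph.Walk.cons h12 q').support → u = v2 :=
      DINAux.hang_disjoint hG hq hpz hv2q hg_pz hg_nq'
    have hg_ne_estar : s(v2, y2) ≠ s(v1, v2) := fun h => hg_nq (h ▸ hestar_q)
    have hRg_v1v2 : DINAux.Rel T.G s(v2, y2) v1 v2 :=
      DINAux.rel_of_adj h12 hg_ne_estar
    have hRg_i : DINAux.Rel T.G s(v2, y2) (T.label i) v2 := by
      refine DINAux.rel_trans (DINAux.rel_of_adj hadj_iv1 ?_) hRg_v1v2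
      rw [Ne, Sym2.eq_iff]
      rintro (⟨h1, -⟩ | ⟨h1, -⟩)
      · exact hv2_ne_lbi h1
      · exact h12.ne h1.symm
    have hz_ne_lbi : T.label z ≠ T.label i := fun h => hz (h ▸ hRg_i)
    have hRg_v2vm : DINAux.Rel T.G s(v2, y2) v2 vm := by
      by_contra hcon
      apply hg_nq
      rw [SimpleGraph.Walk.edges_cons]
      exact List.mem_cons_of_mem _ ((DINAux.not_rel_iff_mem_path hG hq'path).mp hcon)
    have hRg_j : DINAux.Rel T.G s(v2, y2) (T.label j) v2 := by
      refine DINAux.rel_trans (DINAux.rel_of_adj hadj_jvm ?_) (DINAux.rel_symm hRg_v2vm)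
      rw [Ne, Sym2.eq_iff]
      rintro (⟨h1, -⟩ | ⟨-, h2⟩)
      · exact hv2_ne_lbj h1
      · exact hy2_ne_lbj h2
    have hz_ne_lbj : T.label z ≠ T.label j := fun h => hz (h ▸ hRg_j)
    -- sides of the edge s(v1, v2)
    have hRxv1 : DINAux.Rel T.G s(v1, v2) (T.label x) v1 := by
      by_contra hcon
      have hmem := (DINAux.not_rel_iff_mem_path hG hpx).mp hcon
      have h1 := SimpleGraph.Walk.fst_mem_support_of_mem_edges px hmem
      have h2 := SimpleGraph.Walk.snd_mem_support_of_mem_edges px hmem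
      exact h12.ne ((CLx v1 h1 hv1q).trans (CLx v2 h2 hv2q).symm)
    have hRzv2 : DINAux.Rel T.G s(v1, v2) (T.label z) v2 := by
      by_contra hcon
      have hmem := (DINAux.not_rel_iff_mem_path hG hpz).mp hcon
      have h1 := SimpleGraph.Walk.fst_mem_support_of_mem_edges pz hmem
      have h2 := SimpleGraph.Walk.snd_mem_support_of_mem_edges pz hmem
      exact h12.ne ((CLz v1 h1 hv1q).trans (CLz v2 h2 hv2q).symm)
    have hRiv1 : DINAux.Rel T.G s(v1, v2) (T.label i) v1 := by
      apply DINAux.rel_of_adj hadj_iv1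
      rw [Ne, Sym2.eq_iff]
      rintro (⟨h1, -⟩ | ⟨-, h2⟩)
      · exact hv1_ne_lbi h1
      · exact hv2_ne_lbi h2
    have hRjvm : DINAux.Rel T.G s(v1, v2) (T.label j) vm := by
      apply DINAux.rel_of_adj hadj_jvm
      rw [Ne, Sym2.eq_iff]
      rintro (⟨h1, -⟩ | ⟨h1, -⟩)
      · exact hv1_ne_lbj h1
      · exact hv1vm h1
    have hRjv2 : DINAux.Rel T.G s(v1, v2) (T.label j) v2 :=
      DINAux.rel_trans hRjvm (DINAux.rel_symm hRv2vm)
    have hnRi_v2 : ¬ DINAux.Rel T.G s(v1, v2) (T.label i) v2 := fun h =>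
      hnot12 (DINAux.rel_trans (DINAux.rel_symm hRiv1) h)
    have hnRx_v2 : ¬ DINAux.Rel T.G s(v1, v2) (T.label x) v2 := fun h =>
      hnot12 (DINAux.rel_trans (DINAux.rel_symm hRxv1) h)
    have hnRj_v1 : ¬ DINAux.Rel T.G s(v1, v2) (T.label j) v1 := fun h =>
      hnot12 (DINAux.rel_trans (DINAux.rel_symm h) hRjv2)
    have hnRz_v1 : ¬ DINAux.Rel T.G s(v1, v2) (T.label z) v1 := fun h =>
      hnot12 (DINAux.rel_trans (DINAux.rel_symm h) hRzv2)
    have hnR_iz : ¬ DINAux.Rel T.G s(v1, v2) (T.label i) (T.label z) := fun h =>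
      hnot12 (DINAux.rel_trans (DINAux.rel_symm hRiv1) (DINAux.rel_trans h hRzv2))
    have hnR_jx : ¬ DINAux.Rel T.G s(v1, v2) (T.label j) (T.label x) := fun h =>
      hnot12 (DINAux.rel_trans (DINAux.rel_symm hRxv1)
        (DINAux.rel_trans (DINAux.rel_symm h) hRjv2))
    -- the edge s(v1, v2) is internal, hence has nonzero weight
    have hinternal : T.IsInternalEdge s(v1, v2) := by
      refine ⟨hestar_mem, ?_⟩
      intro a hOT
      have h1 : ¬ DINAux.Rel T.G s(v1, v2) (T.label a) v1 :=
        DINAux.not_rel_iff_forall_walk.mpr (hOT v1 hnodev1)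
      have h2 : ¬ DINAux.Rel T.G s(v1, v2) (T.label a) vm :=
        DINAux.not_rel_iff_forall_walk.mpr (hOT vm hnodevm)
      rcases DINAux.rel_dichotomy hpre v1 v2 (T.label a) with hr | hr
      · exact h1 (DINAux.rel_symm hr)
      · exact h2 (DINAux.rel_trans (DINAux.rel_symm hr) hRv2vm)
    have hwne : T.w s(v1, v2) ≠ 0 := hinz _ hinternal
    -- fin-level distinctness
    have hx_ne_i : x ≠ i := fun h => hx_ne_lbi (by rw [h])
    have hx_ne_j : x ≠ j := fun h => hx_ne_lbj (by rw [h])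
    have hz_ne_i : z ≠ i := fun h => hz_ne_lbi (by rw [h])
    have hz_ne_j : z ≠ j := fun h => hz_ne_lbj (by rw [h])
    -- side leaves of the edge
    have hside1 : ∀ l : Fin n, l ∈ T.sideLeaves v1 v2 ↔
        ¬ DINAux.Rel T.G s(v1, v2) (T.label l) v2 := by
      intro l
      rw [WTree.sideLeaves, Finset.mem_filter]
      simp only [Finset.mem_univ, true_and]
      unfold WTree.edgeBetween
      exact ⟨fun h => DINAux.not_rel_iff_forall_walk.mpr h,
        fun h => DINAux.not_rel_iff_forall_walk.mp h⟩
    have hside2 : ∀ l : Fin n, l ∈ T.sideLeaves v2 v1 ↔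
        ¬ DINAux.Rel T.G s(v1, v2) (T.label l) v1 := by
      intro l
      rw [WTree.sideLeaves, Finset.mem_filter]
      simp only [Finset.mem_univ, true_and]
      unfold WTree.edgeBetween
      rw [Sym2.eq_swap]
      exact ⟨fun h => DINAux.not_rel_iff_forall_walk.mpr h,
        fun h => DINAux.not_rel_iff_forall_walk.mp h⟩
    have hiS1 : i ∈ T.sideLeaves v1 v2 := (hside1 i).mpr hnRi_v2
    have hxS1 : x ∈ T.sideLeaves v1 v2 := (hside1 x).mpr hnRx_v2
    have hjS1 : j ∉ T.sideLeaves v1 v2 := fun h => (hside1 j).mp h hRjv2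
    have hzS1 : z ∉ T.sideLeaves v1 v2 := fun h => (hside1 z).mp h hRzv2
    have hjS2 : j ∈ T.sideLeaves v2 v1 := (hside2 j).mpr hnRj_v1
    have hzS2 : z ∈ T.sideLeaves v2 v1 := (hside2 z).mpr hnRz_v1
    have hiS2 : i ∉ T.sideLeaves v2 v1 := fun h => (hside2 i).mp h hRiv1
    have hxS2 : x ∉ T.sideLeaves v2 v1 := fun h => (hside2 x).mp h hRxv1
    -- choose the monochromatic set C
    obtain ⟨C, hCcard, hCi, hCj, hCx, hCz, hCside⟩ : ∃ C : Finset (Fin n),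
        C.card = k - 2 ∧ i ∉ C ∧ j ∉ C ∧ x ∉ C ∧ z ∉ C ∧
        ((∀ c ∈ C, DINAux.Rel T.G s(v1, v2) (T.label c) v1) ∨
          (∀ c ∈ C, DINAux.Rel T.G s(v1, v2) (T.label c) v2)) := by
      have hdich : ∀ c : Fin n, ¬ DINAux.Rel T.G s(v1, v2) (T.label c) v2 →
          DINAux.Rel T.G s(v1, v2) (T.label c) v1 := by
        intro c h
        rcases DINAux.rel_dichotomy hpre v1 v2 (T.label c) with hr | hr
        · exact DINAux.rel_symm hr
        · exact absurd (DINAux.rel_symm hr) h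
      have hdich' : ∀ c : Fin n, ¬ DINAux.Rel T.G s(v1, v2) (T.label c) v1 →
          DINAux.Rel T.G s(v1, v2) (T.label c) v2 := by
        intro c h
        rcases DINAux.rel_dichotomy hpre v1 v2 (T.label c) with hr | hr
        · exact absurd (DINAux.rel_symm hr) h
        · exact DINAux.rel_symm hr
      rcases hps v1 v2 h12 with hb | hb
      · have hsub : ({i, x} : Finset (Fin n)) ⊆ T.sideLeaves v1 v2 := by
          intro t ht
          rcases Finset.mem_insert.mp ht with rfl | ht
          · exact hiS1
          · rw [Finset.mem_singleton] at ht; exact ht ▸ hxS1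
        have hcard2 : ({i, x} : Finset (Fin n)).card = 2 := by
          rw [Finset.card_insert_of_notMem (by simp [Ne.symm hx_ne_i]),
            Finset.card_singleton]
        have hScard : k - 2 ≤ (T.sideLeaves v1 v2 \ {i, x}).card := by
          rw [Finset.card_sdiff_of_subset hsub, hcard2]; omega
        obtain ⟨C, hCsub, hCcard⟩ := Finset.exists_subset_card_eq hScard
        refine ⟨C, hCcard, ?_, ?_, ?_, ?_, Or.inl ?_⟩
        · intro h; exact (Finset.mem_sdiff.mp (hCsub h)).2 (by simp)
        · intro h; exact hjS1 (Finset.mem_sdiff.mp (hCsub h)).1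
        · intro h; exact (Finset.mem_sdiff.mp (hCsub h)).2 (by simp)
        · intro h; exact hzS1 (Finset.mem_sdiff.mp (hCsub h)).1
        · intro c hc
          exact hdich c ((hside1 c).mp (Finset.mem_sdiff.mp (hCsub hc)).1)
      · have hsub : ({j, z} : Finset (Fin n)) ⊆ T.sideLeaves v2 v1 := by
          intro t ht
          rcases Finset.mem_insert.mp ht with rfl | ht
          · exact hjS2
          · rw [Finset.mem_singleton] at ht; exact ht ▸ hzS2
        have hcard2 : ({j, z} : Finset (Fin n)).card = 2 := by
          rw [Finset.card_insert_of_notMem (by simp [Ne.symm hz_ne_j]),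
            Finset.card_singleton]
        have hScard : k - 2 ≤ (T.sideLeaves v2 v1 \ {j, z}).card := by
          rw [Finset.card_sdiff_of_subset hsub, hcard2]; omega
        obtain ⟨C, hCsub, hCcard⟩ := Finset.exists_subset_card_eq hScard
        refine ⟨C, hCcard, ?_, ?_, ?_, ?_, Or.inr ?_⟩
        · intro h; exact hiS2 (Finset.mem_sdiff.mp (hCsub h)).1
        · intro h; exact (Finset.mem_sdiff.mp (hCsub h)).2 (by simp)
        · intro h; exact hxS2 (Finset.mem_sdiff.mp (hCsub h)).1
        · intro h; exact (Finset.mem_sdiff.mp (hCsub h)).2 (by simp)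
        · intro c hc
          exact hdich' c ((hside2 c).mp (Finset.mem_sdiff.mp (hCsub hc)).1)
    -- the main per-edge dichotomy
    have hlbi_npx : T.label i ∉ px.support :=
      DINAux.leaf_not_mem_support hpx (Ne.symm hx_ne_lbi) (Ne.symm hv1_ne_lbi) hleaf_i
    have hlbj_npx : T.label j ∉ px.support :=
      DINAux.leaf_not_mem_support hpx (Ne.symm hx_ne_lbj) (Ne.symm hv1_ne_lbj) hleaf_j
    have hlbi_npz : T.label i ∉ pz.support :=
      DINAux.leaf_not_mem_support hpz (Ne.symm hz_ne_lbi) (Ne.symm hv2_ne_lbi) hleaf_i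
    have hlbj_npz : T.label j ∉ pz.support :=
      DINAux.leaf_not_mem_support hpz (Ne.symm hz_ne_lbj) (Ne.symm hv2_ne_lbj) hleaf_j
    have hkey : ∀ e : Sym2 T.V, e ∈ T.G.edgeSet → e ≠ s(v1, v2) →
        DINAux.Rel T.G e (T.label i) (T.label j) ∨
          DINAux.Rel T.G e (T.label x) (T.label z) := by
      intro e
      induction e using Sym2.ind with
      | _ a b =>
      intro he hne
      by_cases hR : DINAux.Rel T.G s(a, b) (T.label i) (T.label j)
      · exact Or.inl hR
      right
      have hmem := (DINAux.not_rel_iff_mem_path hG hpij).mp hR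
      rw [SimpleGraph.Walk.edges_cons, List.mem_cons, SimpleGraph.Walk.edges_concat,
        List.concat_eq_append, List.mem_append, List.mem_singleton] at hmem
      have hRv1v2 : DINAux.Rel T.G s(a, b) v1 v2 := DINAux.rel_of_adj h12 hne
      have hxside : DINAux.Rel T.G s(a, b) (T.label x) v1 := by
        by_contra hcon
        have hmem2 := (DINAux.not_rel_iff_mem_path hG hpx).mp hcon
        rcases hmem with h | h | h
        · rw [h] at hmem2
          exact hlbi_npx (SimpleGraph.Walk.fst_mem_support_of_mem_edges px hmem2)
        · have ha1 : a ∈ px.support := SimpleGraph.Walk.fst_mem_support_of_mem_edges px hmem2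
          have hb1 : b ∈ px.support := SimpleGraph.Walk.snd_mem_support_of_mem_edges px hmem2
          have ha2 : a ∈ (SimpleGraph.Walk.cons h12 q').support :=
            SimpleGraph.Walk.fst_mem_support_of_mem_edges _ h
          have hb2 : b ∈ (SimpleGraph.Walk.cons h12 q').support :=
            SimpleGraph.Walk.snd_mem_support_of_mem_edges _ h
          exact (T.G.mem_edgeSet.mp he).ne ((CLx a ha1 ha2).trans (CLx b hb1 hb2).symm)
        · rw [h] at hmem2
          exact hlbj_npx (SimpleGraph.Walk.snd_mem_support_of_mem_edges px hmem2)
      have hzside : DINAux.Rel T.G s(a, b) (T.label z) v2 := by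
        by_contra hcon
        have hmem2 := (DINAux.not_rel_iff_mem_path hG hpz).mp hcon
        rcases hmem with h | h | h
        · rw [h] at hmem2
          exact hlbi_npz (SimpleGraph.Walk.fst_mem_support_of_mem_edges pz hmem2)
        · have ha1 : a ∈ pz.support := SimpleGraph.Walk.fst_mem_support_of_mem_edges pz hmem2
          have hb1 : b ∈ pz.support := SimpleGraph.Walk.snd_mem_support_of_mem_edges pz hmem2
          have ha2 : a ∈ (SimpleGraph.Walk.cons h12 q').support :=
            SimpleGraph.Walk.fst_mem_support_of_mem_edges _ h
          have hb2 : b ∈ (SimpleGraph.Walk.cons h12 q').support :=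
            SimpleGraph.Walk.snd_mem_support_of_mem_edges _ h
          exact (T.G.mem_edgeSet.mp he).ne ((CLz a ha1 ha2).trans (CLz b hb1 hb2).symm)
        · rw [h] at hmem2
          exact hlbj_npz (SimpleGraph.Walk.snd_mem_support_of_mem_edges pz hmem2)
      exact DINAux.rel_trans hxside (DINAux.rel_trans hRv1v2 (DINAux.rel_symm hzside))
    -- the independence hypothesis applied to our two sets
    have hX1 : (insert z C).card = k - 1 := by
      rw [Finset.card_insert_of_notMem hCz, hCcard]; omega
    have hX2 : (insert x C).card = k - 1 := by
      rw [Finset.card_insert_of_notMem hCx, hCcard]; omega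
    have hEq := hindep (insert z C) (insert x C) hX1
      (by intro h; rcases Finset.mem_insert.mp h with h | h
          exacts [hz_ne_i h.symm, hCi h])
      (by intro h; rcases Finset.mem_insert.mp h with h | h
          exacts [hz_ne_j h.symm, hCj h])
      hX2
      (by intro h; rcases Finset.mem_insert.mp h with h | h
          exacts [hx_ne_i h.symm, hCi h])
      (by intro h; rcases Finset.mem_insert.mp h with h | h
          exacts [hx_ne_j h.symm, hCj h])
    -- rewrite the weights as sums over edges
    set F : Finset (Fin n) → Sym2 T.V → ℝ := fun I e =>
      if e ∈ T.G.edgeSet ∧ ∃ a ∈ I.image T.label, ∃ b ∈ I.image T.label,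
        ¬ DINAux.Rel T.G e a b then T.w e else 0 with hF
    have hDsum : ∀ I : Finset (Fin n), T.D I = ∑ e : Sym2 T.V, F I e := by
      intro I
      unfold WTree.D treeWeight
      apply Finset.sum_congr rfl
      intro e _
      simp only [hF]
      apply if_congr _ rfl rfl
      apply and_congr_right
      intro _
      constructor
      · rintro ⟨a, ha, b, hb, h⟩
        exact ⟨a, ha, b, hb, DINAux.not_rel_iff_forall_walk.mpr h⟩
      · rintro ⟨a, ha, b, hb, h⟩
        exact ⟨a, ha, b, hb, DINAux.not_rel_iff_forall_walk.mp h⟩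
    have hzero : ∑ e : Sym2 T.V,
        (F (insert i (insert z C)) e - F (insert j (insert z C)) e
          - F (insert i (insert x C)) e + F (insert j (insert x C)) e) = 0 := by
      have h1 : ∀ (f g h' k' : Sym2 T.V → ℝ),
          ∑ e : Sym2 T.V, (f e - g e - h' e + k' e)
            = (∑ e : Sym2 T.V, f e) - (∑ e : Sym2 T.V, g e)
              - (∑ e : Sym2 T.V, h' e) + (∑ e : Sym2 T.V, k' e) := by
        intro f g h' k'
        rw [Finset.sum_add_distrib, Finset.sum_sub_distrib, Finset.sum_sub_distrib]
      rw [h1, ← hDsum, ← hDsum, ← hDsum, ← hDsum]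
      linarith [hEq]
    -- all terms except the one at s(v1, v2) vanish
    have hterm0 : ∀ e : Sym2 T.V, e ≠ s(v1, v2) →
        F (insert i (insert z C)) e - F (insert j (insert z C)) e
          - F (insert i (insert x C)) e + F (insert j (insert x C)) e = 0 := by
      intro e hne
      by_cases he : e ∈ T.G.edgeSet
      · have hswap : ∀ (a b : T.V) (S : Finset T.V), DINAux.Rel T.G e a b →
            ((∃ c ∈ insert a S, ∃ d ∈ insert a S, ¬ DINAux.Rel T.G e c d) ↔
              (∃ c ∈ insert b S, ∃ d ∈ insert b S, ¬ DINAux.Rel T.G e c d)) := by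
          have key : ∀ (a b : T.V) (S : Finset T.V), DINAux.Rel T.G e a b →
              (∃ c ∈ insert a S, ∃ d ∈ insert a S, ¬ DINAux.Rel T.G e c d) →
              (∃ c ∈ insert b S, ∃ d ∈ insert b S, ¬ DINAux.Rel T.G e c d) := by
            rintro a b S hab ⟨c, hc, d, hd, hcd⟩
            rcases Finset.mem_insert.mp hc with rfl | hc'
            · rcases Finset.mem_insert.mp hd with rfl | hd'
              · exact absurd (DINAux.rel_refl _ _) hcd
              · exact ⟨b, Finset.mem_insert_self _ _, d, Finset.mem_insert_of_mem hd',
                  fun h => hcd (DINAux.rel_trans hab h)⟩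
            · rcases Finset.mem_insert.mp hd with rfl | hd'
              · exact ⟨c, Finset.mem_insert_of_mem hc', b, Finset.mem_insert_self _ _,
                  fun h => hcd (DINAux.rel_trans h (DINAux.rel_symm hab))⟩
              · exact ⟨c, Finset.mem_insert_of_mem hc', d, Finset.mem_insert_of_mem hd', hcd⟩
          intro a b S hab
          exact ⟨key a b S hab, key b a S (DINAux.rel_symm hab)⟩
        have hFiff : ∀ (I J : Finset (Fin n)),
            ((∃ a ∈ I.image T.label, ∃ b ∈ I.image T.label, ¬ DINAux.Rel T.G e a b) ↔
              (∃ a ∈ J.image T.label, ∃ b ∈ J.image T.label, ¬ DINAux.Rel T.G e a b)) →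
            F I e = F J e := by
          intro I J hiff
          simp only [hF]
          exact if_congr (and_congr_right fun _ => hiff) rfl rfl
        rcases hkey e he hne with hRij | hRxz
        · have e1 : F (insert i (insert z C)) e = F (insert j (insert z C)) e := by
            apply hFiff
            simp only [Finset.image_insert]
            exact hswap _ _ _ hRij
          have e2 : F (insert i (insert x C)) e = F (insert j (insert x C)) e := by
            apply hFiff
            simp only [Finset.image_insert]
            exact hswap _ _ _ hRij
          rw [e1, e2]; ring
        · have e1 : F (insert i (insert z C)) e = F (insert i (insert x C)) e := by
            apply hFiff
            simp only [Finset.image_insert]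
            rw [Finset.insert_comm (T.label i) (T.label z),
              Finset.insert_comm (T.label i) (T.label x)]
            exact hswap _ _ _ (DINAux.rel_symm hRxz)
          have e2 : F (insert j (insert z C)) e = F (insert j (insert x C)) e := by
            apply hFiff
            simp only [Finset.image_insert]
            rw [Finset.insert_comm (T.label j) (T.label z),
              Finset.insert_comm (T.label j) (T.label x)]
            exact hswap _ _ _ (DINAux.rel_symm hRxz)
          rw [e1, e2]; ring
      · have hF0 : ∀ I, F I e = 0 := by
          intro I
          simp only [hF]
          rw [if_neg]
          rintro ⟨h1, -⟩
          exact he h1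
        rw [hF0, hF0, hF0, hF0]; ring
    have hsingle : ∑ e : Sym2 T.V,
        (F (insert i (insert z C)) e - F (insert j (insert z C)) e
          - F (insert i (insert x C)) e + F (insert j (insert x C)) e)
        = F (insert i (insert z C)) s(v1, v2) - F (insert j (insert z C)) s(v1, v2)
          - F (insert i (insert x C)) s(v1, v2) + F (insert j (insert x C)) s(v1, v2) :=
      Finset.sum_eq_single_of_mem _ (Finset.mem_univ _) (fun e _ hne => hterm0 e hne)
    rw [hsingle] at hzero
    -- evaluate the four terms at s(v1, v2)
    have hallside : ∀ (I : Finset (Fin n)) (v : T.V),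
        (∀ c ∈ I, DINAux.Rel T.G s(v1, v2) (T.label c) v) → F I s(v1, v2) = 0 := by
      intro I v hall
      simp only [hF]
      rw [if_neg]
      rintro ⟨-, a, ha, b, hb, hab⟩
      obtain ⟨ca, hca, rfl⟩ := Finset.mem_image.mp ha
      obtain ⟨cb, hcb, rfl⟩ := Finset.mem_image.mp hb
      exact hab (DINAux.rel_trans (hall ca hca) (DINAux.rel_symm (hall cb hcb)))
    have hcrossw : ∀ (I : Finset (Fin n)) (a b : Fin n), a ∈ I → b ∈ I →
        ¬ DINAux.Rel T.G s(v1, v2) (T.label a) (T.label b) →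
        F I s(v1, v2) = T.w s(v1, v2) := by
      intro I a b ha hb hab
      simp only [hF]
      rw [if_pos]
      exact ⟨hestar_mem, _, Finset.mem_image_of_mem _ ha, _,
        Finset.mem_image_of_mem _ hb, hab⟩
    have hA1i : F (insert i (insert z C)) s(v1, v2) = T.w s(v1, v2) :=
      hcrossw _ i z (Finset.mem_insert_self _ _)
        (Finset.mem_insert_of_mem (Finset.mem_insert_self _ _)) hnR_iz
    have hA2j : F (insert j (insert x C)) s(v1, v2) = T.w s(v1, v2) :=
      hcrossw _ j x (Finset.mem_insert_self _ _)
        (Finset.mem_insert_of_mem (Finset.mem_insert_self _ _)) hnR_jx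
    rcases hCside with hCs | hCs
    · -- C on the v1 side
      have hA2i : F (insert i (insert x C)) s(v1, v2) = 0 := by
        apply hallside _ v1
        intro c hc
        rcases Finset.mem_insert.mp hc with rfl | hc
        · exact hRiv1
        rcases Finset.mem_insert.mp hc with rfl | hc
        · exact hRxv1
        · exact hCs c hc
      rcases C.eq_empty_or_nonempty with hCE | hCne
      · have hA1j : F (insert j (insert z C)) s(v1, v2) = 0 := by
          apply hallside _ v2
          intro c hc
          rcases Finset.mem_insert.mp hc with rfl | hc
          · exact hRjv2
          rcases Finset.mem_insert.mp hc with rfl | hc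
          · exact hRzv2
          · rw [hCE] at hc; exact absurd hc (Finset.notMem_empty _)
        rw [hA1i, hA1j, hA2i, hA2j] at hzero
        apply hwne; linarith
      · obtain ⟨c0, hc0⟩ := hCne
        have hA1j : F (insert j (insert z C)) s(v1, v2) = T.w s(v1, v2) := by
          apply hcrossw _ c0 j
            (Finset.mem_insert_of_mem (Finset.mem_insert_of_mem hc0))
            (Finset.mem_insert_self _ _)
          exact fun h => hnot12 (DINAux.rel_trans (DINAux.rel_symm (hCs c0 hc0))
            (DINAux.rel_trans h hRjv2))
        rw [hA1i, hA1j, hA2i, hA2j] at hzero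
        apply hwne; linarith
    · -- C on the v2 side
      have hA1j : F (insert j (insert z C)) s(v1, v2) = 0 := by
        apply hallside _ v2
        intro c hc
        rcases Finset.mem_insert.mp hc with rfl | hc
        · exact hRjv2
        rcases Finset.mem_insert.mp hc with rfl | hc
        · exact hRzv2
        · exact hCs c hc
      rcases C.eq_empty_or_nonempty with hCE | hCne
      · have hA2i : F (insert i (insert x C)) s(v1, v2) = 0 := by
          apply hallside _ v1
          intro c hc
          rcases Finset.mem_insert.mp hc with rfl | hc
          · exact hRiv1
          rcases Finset.mem_insert.mp hc with rfl | hc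
          · exact hRxv1
          · rw [hCE] at hc; exact absurd hc (Finset.notMem_empty _)
        rw [hA1i, hA1j, hA2i, hA2j] at hzero
        apply hwne; linarith
      · obtain ⟨c0, hc0⟩ := hCne
        have hA2i : F (insert i (insert x C)) s(v1, v2) = T.w s(v1, v2) := by
          apply hcrossw _ i c0 (Finset.mem_insert_self _ _)
            (Finset.mem_insert_of_mem (Finset.mem_insert_of_mem hc0))
          exact fun h => hnot12 (DINAux.rel_trans (DINAux.rel_symm hRiv1)
            (DINAux.rel_trans h (hCs c0 hc0)))
        rw [hA1i, hA1j, hA2i, hA2j] at hzero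
        apply hwne; linarith


end
end
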